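/- arXiv:math-ph/0607029 — 4 statements merged into one kernel-verified Lean document; each statement's English description precedes it below -/
import Mathlib

section
/- Let H be a Jacobi matrix, let z ∈ ℂ with z ∉ σ(H), set Δ(z) = dist(z, σ(H)), ‖t‖_∞ = sup_n t_n and C₂ = 1/(4‖t‖_∞). Then for all n, m ∈ ℤ: |G^z(n,m)| ≤ (2/Δ(z)) · exp(−arcsinh(C₂ Δ(z)) · |n−m|). -/
open MeasureTheory Complex

noncomputable section

abbrev Ltwo := lp (fun _ : ℤ => ℂ) 2

/-- The delta function at site `n` in `ℓ²(ℤ)`. -/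
def delta (n : ℤ) : Ltwo := lp.single 2 n 1

/-- A Jacobi matrix with hopping terms in `[c,C]` and potential bounded by `C`:
a bounded self-adjoint operator on `ℓ²(ℤ)` acting by
`(Hψ)(n) = t_{n+1} ψ(n+1) + v_n ψ(n) + t_n ψ(n-1)`. -/
structure JacobiMatrix (c C : ℝ) where
  t : ℤ → ℝ
  v : ℤ → ℝ
  t_lb : ∀ n, c ≤ t n
  t_ub : ∀ n, t n ≤ C
  v_bd : ∀ n, |v n| ≤ C
  H : Ltwo →L[ℂ] Ltwo
  selfadj : IsSelfAdjoint H
  apply_eq : ∀ (ψ : Ltwo) (n : ℤ),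
    (H ψ : ∀ _ : ℤ, ℂ) n
      = (t (n+1) : ℂ) * (ψ : ∀ _ : ℤ, ℂ) (n+1) + (v n : ℂ) * (ψ : ∀ _ : ℤ, ℂ) n
        + (t n : ℂ) * (ψ : ∀ _ : ℤ, ℂ) (n-1)

/-- The Green function `G^z(n,m) = ⟨δ_n, (H-z)⁻¹ δ_m⟩`. -/
def green {c C : ℝ} (J : JacobiMatrix c C) (z : ℂ) (n m : ℤ) : ℂ :=
  inner (𝕜 := ℂ) (delta n) (Ring.inverse (J.H - z • 1) (delta m))

open scoped Pointwise

namespace CT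

lemma two_toReal : (2 : ENNReal).toReal = 2 := by norm_num

lemma sum_est (a : ℤ → ℂ) (s : ℤ) {M : ℝ} (hM : ∀ i, ‖a i‖ ≤ M) (ψ : Ltwo)
    (F : Finset ℤ) :
    ∑ i ∈ F, ‖a i * (ψ : ∀ _ : ℤ, ℂ) (i + s)‖ ^ (2:ℝ) ≤ (M * ‖ψ‖) ^ (2:ℝ) := by
  have hM0 : 0 ≤ M := le_trans (norm_nonneg (a 0)) (hM 0)
  have h1 : ∀ i ∈ F, ‖a i * (ψ : ∀ _ : ℤ, ℂ) (i + s)‖ ^ (2:ℝ)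
      ≤ M ^ (2:ℝ) * ‖(ψ : ∀ _ : ℤ, ℂ) (i + s)‖ ^ (2:ℝ) := by
    intro i _
    rw [← Real.mul_rpow hM0 (norm_nonneg _)]
    refine Real.rpow_le_rpow (norm_nonneg _) ?_ (by norm_num)
    rw [norm_mul]
    exact mul_le_mul_of_nonneg_right (hM i) (norm_nonneg _)
  calc ∑ i ∈ F, ‖a i * (ψ : ∀ _ : ℤ, ℂ) (i + s)‖ ^ (2:ℝ)
      ≤ ∑ i ∈ F, M ^ (2:ℝ) * ‖(ψ : ∀ _ : ℤ, ℂ) (i + s)‖ ^ (2:ℝ) := Finset.sum_le_sum h1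
    _ = M ^ (2:ℝ) * ∑ i ∈ F, ‖(ψ : ∀ _ : ℤ, ℂ) (i + s)‖ ^ (2:ℝ) := by
        rw [Finset.mul_sum]
    _ ≤ M ^ (2:ℝ) * ‖ψ‖ ^ (2:ℝ) := by
        refine mul_le_mul_of_nonneg_left ?_ (Real.rpow_nonneg hM0 _)
        have := lp.sum_rpow_le_norm_rpow (p := 2) (E := fun _ : ℤ => ℂ)
          (by rw [two_toReal]; norm_num) ψ (F.map (addRightEmbedding s))
        rw [two_toReal] at this
        rw [Finset.sum_map] at this
        simpa using this
    _ = (M * ‖ψ‖) ^ (2:ℝ) := (Real.mul_rpow hM0 (norm_nonneg _)).symm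

lemma memdiag (a : ℤ → ℂ) (s : ℤ) {M : ℝ} (hM : ∀ i, ‖a i‖ ≤ M) (ψ : Ltwo) :
    Memℓp (fun i => a i * (ψ : ∀ _ : ℤ, ℂ) (i + s)) 2 := by
  refine memℓp_gen' (C := (M * ‖ψ‖) ^ (2:ℝ)) ?_
  intro F
  rw [two_toReal]
  exact sum_est a s hM ψ F

/-- The operator `(T ψ)(n) = a n * ψ (n + s)`. -/
def diag (a : ℤ → ℂ) (s : ℤ) {M : ℝ} (hM : ∀ i, ‖a i‖ ≤ M) : Ltwo →L[ℂ] Ltwo :=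
  LinearMap.mkContinuous
    { toFun := fun ψ => (⟨fun i => a i * (ψ : ∀ _ : ℤ, ℂ) (i + s), memdiag a s hM ψ⟩ : Ltwo)
      map_add' := by
        intro ψ φ
        apply lp.ext
        funext i
        simp [mul_add]
        rfl
      map_smul' := by
        intro z ψ
        apply lp.ext
        funext i
        simp [lp.coeFn_smul]
        ring }
    M
    (by
      intro ψ
      have hM0 : 0 ≤ M := le_trans (norm_nonneg (a 0)) (hM 0)
      refine lp.norm_le_of_forall_sum_le (by rw [two_toReal]; norm_num)
        (mul_nonneg hM0 (norm_nonneg _)) ?_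
      intro F
      rw [two_toReal]
      exact sum_est a s hM ψ F)

lemma diag_apply (a : ℤ → ℂ) (s : ℤ) {M : ℝ} (hM : ∀ i, ‖a i‖ ≤ M) (ψ : Ltwo) (i : ℤ) :
    ((diag a s hM) ψ : ∀ _ : ℤ, ℂ) i = a i * (ψ : ∀ _ : ℤ, ℂ) (i + s) := rfl

lemma diag_norm (a : ℤ → ℂ) (s : ℤ) {M : ℝ} (hM : ∀ i, ‖a i‖ ≤ M) :
    ‖diag a s hM‖ ≤ M := by
  have hM0 : 0 ≤ M := le_trans (norm_nonneg (a 0)) (hM 0)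
  exact LinearMap.mkContinuous_norm_le _ hM0 _




instance : Nontrivial Ltwo := by
  refine ⟨lp.single 2 (0:ℤ) (1:ℂ), 0, fun h => ?_⟩
  have := congrFun (congrArg (Subtype.val) h) 0
  rw [lp.single_apply_self] at this
  simpa using this

variable {A : Type*} [CStarAlgebra A]

lemma starNormal_sub_smul_one {H : A} (hH : IsSelfAdjoint H) (z : ℂ) :
    IsStarNormal (H - z • 1) := by
  constructor
  have hstar : star (H - z • 1) = (H - z • 1) + (z - starRingEnd ℂ z) • 1 := by
    rw [star_sub, hH.star_eq, star_smul, star_one, sub_smul]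
    abel
  rw [hstar]
  show (H - z • 1 + _) * _ = _ * (H - z • 1 + _)
  set a := H - z • 1
  set c := z - starRingEnd ℂ z
  calc (a + c • 1) * a = a * a + c • a := by
        rw [add_mul, smul_mul_assoc, one_mul]
    _ = a * (a + c • 1) := by rw [mul_add, mul_smul_comm, mul_one]

lemma resolvent_norm {H : A} (hH : IsSelfAdjoint H) (z : ℂ)
    (hu : IsUnit (H - z • 1)) (hΔ : 0 < Metric.infDist z (spectrum ℂ H)) :
    ‖Ring.inverse (H - z • 1)‖ ≤ (Metric.infDist z (spectrum ℂ H))⁻¹ := by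
  set Δ := Metric.infDist z (spectrum ℂ H)
  obtain ⟨u, huval⟩ := hu
  have hnormal : IsStarNormal ((u : A)) := huval ▸ starNormal_sub_smul_one hH z
  have hnormalinv : IsStarNormal ((↑u⁻¹ : A)) := by
    constructor
    have hc : star u * u = u * star u := Units.ext (hnormal.star_comm_self)
    show star (↑u⁻¹ : A) * ↑u⁻¹ = ↑u⁻¹ * star (↑u⁻¹ : A)
    calc star (↑u⁻¹ : A) * ↑u⁻¹ = ↑(star u)⁻¹ * ↑u⁻¹ := by rw [Units.coe_star_inv]
      _ = ↑(u * star u)⁻¹ := by rw [mul_inv_rev, Units.val_mul]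
      _ = ↑(star u * u)⁻¹ := by rw [hc]
      _ = ↑u⁻¹ * ↑(star u)⁻¹ := by rw [mul_inv_rev, Units.val_mul]
      _ = ↑u⁻¹ * star (↑u⁻¹ : A) := by rw [Units.coe_star_inv]
  -- spectral radius bound
  have hsr : spectralRadius ℂ (↑u⁻¹ : A) ≤ ENNReal.ofReal Δ⁻¹ := by
    refine iSup₂_le fun μ hμ => ?_
    have hμ0 : μ ≠ 0 := by
      rintro rfl
      exact spectrum.zero_notMem ℂ u⁻¹.isUnit hμ
    have hinv : (↑(Units.mk0 μ hμ0)⁻¹ : ℂ) ∈ spectrum ℂ ((↑(u⁻¹)⁻¹ : A)) :=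
      (spectrum.inv_mem_iff).mp hμ
    rw [inv_inv] at hinv
    have hspec : (μ⁻¹ : ℂ) ∈ spectrum ℂ H - ({z} : Set ℂ) := by
      rw [spectrum.sub_singleton_eq, Algebra.algebraMap_eq_smul_one, ← huval]
      simpa using hinv
    obtain ⟨κ, hκ, w, hw, hkw⟩ := Set.mem_sub.mp hspec
    rw [Set.mem_singleton_iff] at hw
    rw [hw] at hkw
    have hdist : Δ ≤ ‖κ - z‖ := by
      have := Metric.infDist_le_dist_of_mem (x := z) hκ
      rwa [dist_eq_norm, norm_sub_rev] at this
    have hμnorm : ‖μ‖ ≤ Δ⁻¹ := by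
      have h1 : ‖μ⁻¹‖ = ‖κ - z‖ := by rw [hkw]
      have h2 : ‖μ‖ = ‖κ - z‖⁻¹ := by
        rw [← h1, norm_inv, inv_inv]
      rw [h2]
      exact inv_anti₀ hΔ hdist
    calc (‖μ‖₊ : ENNReal) = ENNReal.ofReal ‖μ‖ := (ofReal_norm μ).symm
      _ ≤ ENNReal.ofReal Δ⁻¹ := ENNReal.ofReal_le_ofReal hμnorm
  have heq : spectralRadius ℂ (↑u⁻¹ : A) = ‖(↑u⁻¹ : A)‖₊ :=
    IsStarNormal.spectralRadius_eq_nnnorm _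
  rw [heq, ← enorm_eq_nnnorm, ← ofReal_norm] at hsr
  have : ‖(↑u⁻¹ : A)‖ ≤ Δ⁻¹ :=
    (ENNReal.ofReal_le_ofReal_iff (by positivity)).mp hsr
  rw [← huval, Ring.inverse_unit]
  exact this

lemma mul_bd_pos {x d : ℝ} (hx : 0 ≤ x) (h1 : 0 ≤ d) (h2 : d ≤ 1) :
    0 ≤ x * d ∧ x * d ≤ x :=
  ⟨mul_nonneg hx h1, by nlinarith⟩

lemma exp_sub_one_bd_neg {η u : ℝ} (h1 : -η ≤ u) (h2 : u ≤ 0) :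
    |Real.exp u - 1| ≤ 1 - Real.exp (-η) := by
  have e1 : Real.exp u ≤ 1 := Real.exp_le_one_iff.mpr h2
  have e2 : Real.exp (-η) ≤ Real.exp u := Real.exp_le_exp.mpr h1
  rw [abs_sub_comm, _root_.abs_of_nonneg (by linarith)]
  linarith

lemma exp_sub_one_bd_pos {η u : ℝ} (h1 : 0 ≤ u) (h2 : u ≤ η) :
    |Real.exp u - 1| ≤ Real.exp η - 1 := by
  have e1 : 1 ≤ Real.exp u := Real.one_le_exp h1
  have e2 : Real.exp u ≤ Real.exp η := Real.exp_le_exp.mpr h2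
  rw [_root_.abs_of_nonneg (by linarith)]
  linarith


end CT

open CT

set_option maxHeartbeats 1600000 in
/-- the Combes–Thomas estimate for Jacobi matrices. -/
theorem stmt1 (c C : ℝ) (hc : 0 < c) (hcC : c ≤ C) (J : JacobiMatrix c C)
    (z : ℂ) (hz : z ∉ spectrum ℂ J.H) (n m : ℤ) :
    ‖green J z n m‖ ≤
      2 / Metric.infDist z (spectrum ℂ J.H) *
        Real.exp (- Real.arsinh ((4 * ⨆ k, J.t k)⁻¹ * Metric.infDist z (spectrum ℂ J.H))
          * |(n : ℝ) - (m : ℝ)|) := by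
  classical
  set Δ := Metric.infDist z (spectrum ℂ J.H) with hΔdef
  -- sup of hopping terms
  set T := ⨆ k, J.t k with hTdef
  have hbdd : BddAbove (Set.range J.t) := ⟨C, by rintro x ⟨k, rfl⟩; exact J.t_ub k⟩
  have htleT : ∀ k, J.t k ≤ T := fun k => le_ciSup hbdd k
  have hTpos : 0 < T := lt_of_lt_of_le hc ((J.t_lb 0).trans (htleT 0))
  -- positivity of the distance
  have hσne : (spectrum ℂ J.H).Nonempty := spectrum.nonempty J.H
  have hΔpos : 0 < Δ :=
    ((spectrum.isClosed (𝕜 := ℂ) J.H).notMem_iff_infDist_pos hσne).mp hz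
  -- the unit
  have hu : IsUnit (J.H - z • 1) := by
    have h1 : IsUnit (algebraMap ℂ (Ltwo →L[ℂ] Ltwo) z - J.H) := spectrum.notMem_iff.mp hz
    have := h1.neg
    rwa [neg_sub, Algebra.algebraMap_eq_smul_one] at this
  set η := Real.arsinh ((4 * T)⁻¹ * Δ) with hηdef
  have hη0 : 0 ≤ η := by rw [← Real.arsinh_zero]; exact Real.arsinh_le_arsinh.mpr (by positivity)
  have hsinh : Real.exp η - Real.exp (-η) = 2 * ((4 * T)⁻¹ * Δ) := by
    have := Real.sinh_arsinh ((4 * T)⁻¹ * Δ)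
    rw [Real.sinh_eq] at this
    linarith
  -- the weight
  set ε : ℝ := if m ≤ n then 1 else -1 with hεdef
  have hεabs : ε * ((n : ℝ) - m) = |(n : ℝ) - m| := by
    rcases le_or_gt m n with h | h
    · rw [hεdef, if_pos h, one_mul, _root_.abs_of_nonneg (by exact_mod_cast sub_nonneg.mpr (Int.cast_le.mpr h))]
    · rw [hεdef, if_neg (not_le.mpr h), _root_.abs_of_nonpos (by exact_mod_cast sub_nonpos.mpr (Int.cast_le.mpr h.le))]
      ring
  set k : ℤ := max |n| |m| with hkdef
  have habsn : -|n| ≤ n ∧ n ≤ |n| := ⟨neg_abs_le n, le_abs_self n⟩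
  have habsm : -|m| ≤ m ∧ m ≤ |m| := ⟨neg_abs_le m, le_abs_self m⟩
  have hk0 : (0:ℤ) ≤ k := le_trans (abs_nonneg n) (le_max_left _ _)
  set gZ : ℤ → ℤ := fun j => max (-k) (min j k) with hgZdef
  have hg_mono : ∀ j : ℤ, gZ j ≤ gZ (j+1) := by intro j; simp only [hgZdef]; omega
  have hg_lip : ∀ j : ℤ, gZ (j+1) ≤ gZ j + 1 := by intro j; simp only [hgZdef]; omega
  have hg_lb : ∀ j : ℤ, -k ≤ gZ j := by intro j; simp only [hgZdef]; omega
  have hg_ub : ∀ j : ℤ, gZ j ≤ k := by intro j; simp only [hgZdef]; omega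
  have hg_abs : ∀ j : ℤ, |gZ j| ≤ k := by
    intro j; rw [abs_le]; exact ⟨hg_lb j, hg_ub j⟩
  have hgn : gZ n = n := by simp only [hgZdef, hkdef]; omega
  have hgm : gZ m = m := by simp only [hgZdef, hkdef]; omega
  set w : ℤ → ℝ := fun j => Real.exp (ε * η * (gZ j : ℝ)) with hwdef
  have hwpos : ∀ j, 0 < w j := fun j => Real.exp_pos _
  have hwne : ∀ j, (w j : ℂ) ≠ 0 := fun j => by
    simp only [ne_eq, Complex.ofReal_eq_zero]; exact (hwpos j).ne'
  have hεle : |ε| ≤ 1 := by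
    rcases le_or_gt m n with h | h
    · simp [hεdef, h]
    · simp [hεdef, not_le.mpr h]
  have hwbd : ∀ j, ‖((w j : ℝ) : ℂ)‖ ≤ Real.exp (η * (k : ℝ)) := by
    intro j
    rw [Complex.norm_real, Real.norm_eq_abs, _root_.abs_of_pos (hwpos j)]
    apply Real.exp_le_exp.mpr
    calc ε * η * (gZ j : ℝ) ≤ |ε * η * (gZ j : ℝ)| := le_abs_self _
      _ = |ε| * η * |(gZ j : ℝ)| := by rw [abs_mul, abs_mul, _root_.abs_of_nonneg hη0]
      _ ≤ 1 * η * (k : ℝ) := by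
          apply mul_le_mul (mul_le_mul_of_nonneg_right hεle hη0) ?_ (abs_nonneg _)
            (by positivity)
          · rw [← Int.cast_abs]; exact_mod_cast hg_abs j
      _ = η * (k : ℝ) := by ring
  have hwbd' : ∀ j, ‖(((w j)⁻¹ : ℝ) : ℂ)‖ ≤ Real.exp (η * (k : ℝ)) := by
    intro j
    rw [Complex.norm_real, Real.norm_eq_abs, _root_.abs_of_pos (inv_pos.mpr (hwpos j)),
      hwdef]
    simp only
    rw [← Real.exp_neg]
    apply Real.exp_le_exp.mpr
    calc -(ε * η * (gZ j : ℝ)) ≤ |ε * η * (gZ j : ℝ)| := neg_le_abs _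
      _ = |ε| * η * |(gZ j : ℝ)| := by rw [abs_mul, abs_mul, _root_.abs_of_nonneg hη0]
      _ ≤ 1 * η * (k : ℝ) := by
          apply mul_le_mul (mul_le_mul_of_nonneg_right hεle hη0) ?_ (abs_nonneg _)
            (by positivity)
          · rw [← Int.cast_abs]; exact_mod_cast hg_abs j
      _ = η * (k : ℝ) := by ring
  -- the multiplication operators
  set W : Ltwo →L[ℂ] Ltwo := diag (fun j => ((w j : ℝ) : ℂ)) 0 hwbd with hWdef
  set W' : Ltwo →L[ℂ] Ltwo := diag (fun j => (((w j)⁻¹ : ℝ) : ℂ)) 0 hwbd' with hW'def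
  have hW_apply : ∀ (ψ : Ltwo) (j : ℤ), (W ψ : ∀ _ : ℤ, ℂ) j = (w j : ℂ) * (ψ : ∀ _ : ℤ, ℂ) j := by
    intro ψ j; rw [hWdef, diag_apply, add_zero]
  have hW'_apply : ∀ (ψ : Ltwo) (j : ℤ),
      (W' ψ : ∀ _ : ℤ, ℂ) j = ((w j)⁻¹ : ℝ) * (ψ : ∀ _ : ℤ, ℂ) j := by
    intro ψ j; rw [hW'def, diag_apply, add_zero]
  have hWW' : W * W' = 1 := by
    refine ContinuousLinearMap.ext fun ψ => lp.ext (funext fun j => ?_)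
    rw [ContinuousLinearMap.mul_apply, hW_apply, hW'_apply, ContinuousLinearMap.one_apply]
    rw [← mul_assoc]
    push_cast
    rw [mul_inv_cancel₀ (hwne j), one_mul]
  have hW'W : W' * W = 1 := by
    refine ContinuousLinearMap.ext fun ψ => lp.ext (funext fun j => ?_)
    rw [ContinuousLinearMap.mul_apply, hW'_apply, hW_apply, ContinuousLinearMap.one_apply]
    rw [← mul_assoc]
    push_cast
    rw [inv_mul_cancel₀ (hwne j), one_mul]
  -- the perturbation coefficients
  set Ea : ℝ := if m ≤ n then 1 - Real.exp (-η) else Real.exp η - 1 with hEadef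
  set Eb : ℝ := if m ≤ n then Real.exp η - 1 else 1 - Real.exp (-η) with hEbdef
  have hEab : Ea + Eb = Real.exp η - Real.exp (-η) := by
    rcases le_or_gt m n with h | h
    · rw [hEadef, hEbdef, if_pos h, if_pos h]; ring
    · rw [hEadef, hEbdef, if_neg (not_le.mpr h), if_neg (not_le.mpr h)]; ring
  set a : ℤ → ℂ := fun i =>
    ((J.t (i+1) : ℝ) : ℂ) * ((w i : ℂ) * ((w (i+1) : ℝ) : ℂ)⁻¹ - 1) with hadef
  set b : ℤ → ℂ := fun i =>
    ((J.t i : ℝ) : ℂ) * ((w i : ℂ) * ((w (i-1) : ℝ) : ℂ)⁻¹ - 1) with hbdef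
  -- ratio of weights
  have hratioR : ∀ i j : ℤ, w i * (w j)⁻¹ = Real.exp (ε * η * ((gZ i : ℝ) - (gZ j : ℝ))) := by
    intro i j
    rw [hwdef]
    simp only
    rw [← Real.exp_neg, ← Real.exp_add]
    congr 1
    ring
  have hnorm_ratio : ∀ i j : ℤ, ‖(w i : ℂ) * ((w j : ℝ) : ℂ)⁻¹ - 1‖
      = |Real.exp (ε * η * ((gZ i : ℝ) - (gZ j : ℝ))) - 1| := by
    intro i j
    rw [show (w i : ℂ) * ((w j : ℝ) : ℂ)⁻¹ - 1 = ((w i * (w j)⁻¹ - 1 : ℝ) : ℂ) from by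
      push_cast; ring]
    rw [Complex.norm_real, Real.norm_eq_abs, hratioR]
  have hEa0 : 0 ≤ Ea := by
    rcases le_or_gt m n with h | h
    · rw [hEadef, if_pos h]
      have := Real.exp_le_one_iff.mpr (neg_nonpos.mpr hη0)
      linarith
    · rw [hEadef, if_neg (not_le.mpr h)]
      have := Real.one_le_exp hη0
      linarith
  have hEb0 : 0 ≤ Eb := by
    rcases le_or_gt m n with h | h
    · rw [hEbdef, if_pos h]
      have := Real.one_le_exp hη0
      linarith
    · rw [hEbdef, if_neg (not_le.mpr h)]
      have := Real.exp_le_one_iff.mpr (neg_nonpos.mpr hη0)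
      linarith
  have hexp_bd_a : ∀ i : ℤ, |Real.exp (ε * η * ((gZ i : ℝ) - (gZ (i+1) : ℝ))) - 1| ≤ Ea := by
    intro i
    have h01 : (gZ i : ℝ) ≤ (gZ (i+1) : ℝ) := by exact_mod_cast hg_mono i
    have h11 : (gZ (i+1) : ℝ) ≤ (gZ i : ℝ) + 1 := by exact_mod_cast hg_lip i
    have hd1 : (0:ℝ) ≤ (gZ (i+1) : ℝ) - gZ i := by linarith
    have hd2 : (gZ (i+1) : ℝ) - gZ i ≤ 1 := by linarith
    obtain ⟨hu1, hu2⟩ := mul_bd_pos hη0 hd1 hd2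
    rcases le_or_gt m n with hmn | hmn
    · have hε1 : ε = 1 := by rw [hεdef, if_pos hmn]
      rw [hEadef, if_pos hmn, hε1,
        show (1:ℝ) * η * ((gZ i : ℝ) - gZ (i+1)) = -(η * ((gZ (i+1) : ℝ) - gZ i)) from by ring]
      exact exp_sub_one_bd_neg (by linarith) (by linarith)
    · have hε1 : ε = -1 := by rw [hεdef, if_neg (not_le.mpr hmn)]
      rw [hEadef, if_neg (not_le.mpr hmn), hε1,
        show (-1:ℝ) * η * ((gZ i : ℝ) - gZ (i+1)) = η * ((gZ (i+1) : ℝ) - gZ i) from by ring]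
      exact exp_sub_one_bd_pos (by linarith) (by linarith)
  have hexp_bd_b : ∀ i : ℤ, |Real.exp (ε * η * ((gZ i : ℝ) - (gZ (i-1) : ℝ))) - 1| ≤ Eb := by
    intro i
    have hi : i - 1 + 1 = i := by ring
    have h01 : (gZ (i-1) : ℝ) ≤ (gZ i : ℝ) := by
      have := hg_mono (i-1); rw [hi] at this; exact_mod_cast this
    have h11 : (gZ i : ℝ) ≤ (gZ (i-1) : ℝ) + 1 := by
      have := hg_lip (i-1); rw [hi] at this; exact_mod_cast this
    have hd1 : (0:ℝ) ≤ (gZ i : ℝ) - gZ (i-1) := by linarith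
    have hd2 : (gZ i : ℝ) - gZ (i-1) ≤ 1 := by linarith
    obtain ⟨hu1, hu2⟩ := mul_bd_pos hη0 hd1 hd2
    rcases le_or_gt m n with hmn | hmn
    · have hε1 : ε = 1 := by rw [hεdef, if_pos hmn]
      rw [hEbdef, if_pos hmn, hε1,
        show (1:ℝ) * η * ((gZ i : ℝ) - gZ (i-1)) = η * ((gZ i : ℝ) - gZ (i-1)) from by ring]
      exact exp_sub_one_bd_pos (by linarith) (by linarith)
    · have hε1 : ε = -1 := by rw [hεdef, if_neg (not_le.mpr hmn)]
      rw [hEbdef, if_neg (not_le.mpr hmn), hε1,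
        show (-1:ℝ) * η * ((gZ i : ℝ) - gZ (i-1)) = -(η * ((gZ i : ℝ) - gZ (i-1))) from by ring]
      exact exp_sub_one_bd_neg (by linarith) (by linarith)
  have ha_bd : ∀ i, ‖a i‖ ≤ T * Ea := by
    intro i
    rw [hadef]
    simp only
    rw [norm_mul, hnorm_ratio, Complex.norm_real, Real.norm_eq_abs,
      _root_.abs_of_nonneg (le_trans hc.le (J.t_lb (i+1)))]
    exact mul_le_mul (htleT (i+1)) (hexp_bd_a i) (abs_nonneg _) hTpos.le
  have hb_bd : ∀ i, ‖b i‖ ≤ T * Eb := by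
    intro i
    rw [hbdef]
    simp only
    rw [norm_mul, hnorm_ratio, Complex.norm_real, Real.norm_eq_abs,
      _root_.abs_of_nonneg (le_trans hc.le (J.t_lb i))]
    exact mul_le_mul (htleT i) (hexp_bd_b i) (abs_nonneg _) hTpos.le
  -- the perturbation operators
  set Ba : Ltwo →L[ℂ] Ltwo := diag a 1 ha_bd with hBadef
  set Bb : Ltwo →L[ℂ] Ltwo := diag b (-1) hb_bd with hBbdef
  set B : Ltwo →L[ℂ] Ltwo := Ba + Bb with hBdef
  have hBnorm : ‖B‖ ≤ Δ / 2 := by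
    calc ‖B‖ ≤ ‖Ba‖ + ‖Bb‖ := norm_add_le _ _
      _ ≤ T * Ea + T * Eb := add_le_add (diag_norm _ _ _) (diag_norm _ _ _)
      _ = T * (Ea + Eb) := by ring
      _ = T * (2 * ((4 * T)⁻¹ * Δ)) := by rw [hEab, hsinh]
      _ = Δ / 2 := by field_simp; ring
  -- conjugation identity
  have hconj : W * J.H * W' = J.H + B := by
    refine ContinuousLinearMap.ext fun ψ => lp.ext (funext fun j => ?_)
    have hj1 : j + (-1 : ℤ) = j - 1 := by ring
    rw [ContinuousLinearMap.mul_apply, ContinuousLinearMap.mul_apply, hW_apply, J.apply_eq,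
      hW'_apply, hW'_apply, hW'_apply]
    have hrhs : ((J.H + B) ψ : ∀ _ : ℤ, ℂ) j
        = (J.H ψ : ∀ _ : ℤ, ℂ) j + a j * (ψ : ∀ _ : ℤ, ℂ) (j+1)
          + b j * (ψ : ∀ _ : ℤ, ℂ) (j-1) := by
      rw [ContinuousLinearMap.add_apply, lp.coeFn_add, Pi.add_apply, hBdef,
        ContinuousLinearMap.add_apply, lp.coeFn_add, Pi.add_apply, hBadef, hBbdef,
        diag_apply, diag_apply, hj1]
      ring
    rw [hrhs, J.apply_eq, hadef, hbdef]
    simp only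
    push_cast
    field_simp [hwne j]
    ring
  -- the resolvent and its norm
  set u : (Ltwo →L[ℂ] Ltwo)ˣ := hu.unit with hudef
  have hu_spec : (↑u : Ltwo →L[ℂ] Ltwo) = J.H - z • 1 := hu.unit_spec
  set R : Ltwo →L[ℂ] Ltwo := (↑u⁻¹ : Ltwo →L[ℂ] Ltwo) with hRdef
  have hR : ‖R‖ ≤ Δ⁻¹ := by
    have h := resolvent_norm J.selfadj z hu hΔpos
    rwa [← hu_spec, Ring.inverse_unit] at h
  set x : Ltwo →L[ℂ] Ltwo := -(R * B) with hxdef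
  have hxnorm : ‖x‖ ≤ 1/2 := by
    rw [hxdef, norm_neg]
    calc ‖R * B‖ ≤ ‖R‖ * ‖B‖ := norm_mul_le _ _
      _ ≤ Δ⁻¹ * (Δ / 2) := mul_le_mul hR hBnorm (norm_nonneg _) (by positivity)
      _ = 1/2 := by field_simp
  have hx1 : ‖x‖ < 1 := lt_of_le_of_lt hxnorm (by norm_num)
  set v : (Ltwo →L[ℂ] Ltwo)ˣ := Units.oneSub x hx1 with hvdef
  set Wu : (Ltwo →L[ℂ] Ltwo)ˣ := ⟨W, W', hWW', hW'W⟩ with hWudef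
  have hWuinv : (↑Wu⁻¹ : Ltwo →L[ℂ] Ltwo) = W' := rfl
  have huv : u * v = Wu * u * Wu⁻¹ := by
    refine Units.ext ?_
    rw [Units.val_mul, Units.val_mul, Units.val_mul, hWuinv]
    have hval : (↑v : Ltwo →L[ℂ] Ltwo) = 1 + R * B := by
      rw [hvdef, Units.val_oneSub, hxdef, sub_neg_eq_add]
    rw [hval]
    have hlhs : (↑u : Ltwo →L[ℂ] Ltwo) * (1 + R * B) = ↑u + B := by
      rw [mul_add, mul_one, ← mul_assoc, hRdef, u.mul_inv, one_mul]
    rw [hlhs, hu_spec]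
    have hscal : W * (z • (1 : Ltwo →L[ℂ] Ltwo)) * W' = z • 1 := by
      rw [mul_smul_comm, mul_one, smul_mul_assoc, hWW']
    calc J.H - z • 1 + B = (J.H + B) - z • 1 := by abel
      _ = W * J.H * W' - W * (z • 1) * W' := by rw [hconj, hscal]
      _ = W * (J.H - z • 1) * W' := by rw [mul_sub, sub_mul]
  have hKinv : (↑v⁻¹ : Ltwo →L[ℂ] Ltwo) * R = W * R * W' := by
    have h1 : (u * v)⁻¹ = Wu * u⁻¹ * Wu⁻¹ := by
      rw [huv, mul_inv_rev, mul_inv_rev, inv_inv]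
      group
    have h2 := congrArg (fun q : (Ltwo →L[ℂ] Ltwo)ˣ => (↑q : Ltwo →L[ℂ] Ltwo)) h1
    simp only [mul_inv_rev, Units.val_mul, hWuinv] at h2
    rw [← hRdef] at h2
    exact h2
  -- norm of the inverse of `v`
  have hvinv_norm : ‖(↑v⁻¹ : Ltwo →L[ℂ] Ltwo)‖ ≤ 2 := by
    have hval : (↑v⁻¹ : Ltwo →L[ℂ] Ltwo) = ∑' i : ℕ, x ^ i := rfl
    rw [hval]
    have h1 : ‖(1 : Ltwo →L[ℂ] Ltwo)‖ = 1 := by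
      rw [ContinuousLinearMap.one_def]
      exact ContinuousLinearMap.norm_id
    have h2 := tsum_geometric_le_of_norm_lt_one x hx1
    have h3 : (1 - ‖x‖)⁻¹ ≤ 2 := by
      have : (1:ℝ)/2 ≤ 1 - ‖x‖ := by linarith
      calc (1 - ‖x‖)⁻¹ ≤ ((1:ℝ)/2)⁻¹ := by
            apply inv_anti₀ (by norm_num) this
        _ = 2 := by norm_num
    rw [h1] at h2
    linarith
  have hWRW : ‖W * R * W'‖ ≤ 2 * Δ⁻¹ := by
    rw [← hKinv]
    calc ‖(↑v⁻¹ : Ltwo →L[ℂ] Ltwo) * R‖ ≤ ‖(↑v⁻¹ : Ltwo →L[ℂ] Ltwo)‖ * ‖R‖ := norm_mul_le _ _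
      _ ≤ 2 * Δ⁻¹ := mul_le_mul hvinv_norm hR (norm_nonneg _) (by norm_num)
  -- decompose the resolvent
  have hRdecomp : R = W' * (W * R * W') * W := by
    calc R = 1 * R * 1 := by rw [one_mul, mul_one]
      _ = (W' * W) * R * (W' * W) := by rw [hW'W]
      _ = W' * (W * R * W') * W := by noncomm_ring
  -- Green function computation
  have hWdelta : W (delta m) = ((w m : ℝ) : ℂ) • delta m := by
    refine lp.ext (funext fun j => ?_)
    rw [hW_apply, lp.coeFn_smul, Pi.smul_apply, smul_eq_mul]
    rcases eq_or_ne j m with rfl | hj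
    · rfl
    · rw [show (delta m : ∀ _ : ℤ, ℂ) j = 0 from lp.single_apply_ne 2 m 1 hj]
      rw [mul_zero, mul_zero]
  set K : ℂ := ((W * R * W') (delta m) : ∀ _ : ℤ, ℂ) n with hKdef
  have hgreen : green J z n m = ((w n)⁻¹ : ℝ) * (((w m : ℝ) : ℂ) * K) := by
    rw [green, ← hu_spec, Ring.inverse_unit, ← hRdef]
    rw [show R (delta m) = (W' * ((W * R * W') * W)) (delta m) from by
      rw [← mul_assoc, ← hRdecomp]]
    rw [ContinuousLinearMap.mul_apply, ContinuousLinearMap.mul_apply, hWdelta, _root_.map_smul]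
    rw [delta, lp.inner_single_left]
    rw [hW'_apply]
    rw [lp.coeFn_smul, Pi.smul_apply, smul_eq_mul]
    simp [hKdef]
  have hKnorm : ‖K‖ ≤ 2 * Δ⁻¹ := by
    calc ‖K‖ ≤ ‖(W * R * W') (delta m)‖ :=
          lp.norm_apply_le_norm (by norm_num) ((W * R * W') (delta m)) n
      _ ≤ ‖W * R * W'‖ * ‖delta m‖ := ContinuousLinearMap.le_opNorm _ _
      _ = ‖W * R * W'‖ := by
          rw [show ‖delta m‖ = 1 from by
            have h := lp.norm_single (E := fun _ : ℤ => ℂ) (p := 2)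
              (by norm_num) m (1:ℂ)
            simpa [delta] using h]
          rw [mul_one]
      _ ≤ 2 * Δ⁻¹ := hWRW
  have hwfinal : (w n)⁻¹ * w m = Real.exp (-(η * |(n:ℝ) - (m:ℝ)|)) := by
    rw [mul_comm, hratioR m n, hgn, hgm]
    congr 1
    rw [show ε * η * ((m:ℝ) - (n:ℝ)) = -(η * (ε * ((n:ℝ) - (m:ℝ)))) from by ring, hεabs]
  calc ‖green J z n m‖ = (w n)⁻¹ * (w m * ‖K‖) := by
        rw [hgreen, norm_mul, norm_mul, Complex.norm_real, Complex.norm_real,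
          Real.norm_eq_abs, Real.norm_eq_abs, _root_.abs_of_pos (inv_pos.mpr (hwpos n)),
          _root_.abs_of_pos (hwpos m)]
    _ ≤ (w n)⁻¹ * (w m * (2 * Δ⁻¹)) := by
        apply mul_le_mul_of_nonneg_left ?_ (inv_pos.mpr (hwpos n)).le
        exact mul_le_mul_of_nonneg_left hKnorm (hwpos m).le
    _ = ((w n)⁻¹ * w m) * (2 * Δ⁻¹) := by ring
    _ = 2 / Δ * Real.exp (-(η * |(n:ℝ) - (m:ℝ)|)) := by
        rw [hwfinal, div_eq_mul_inv]
        ring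
    _ = 2 / Δ * Real.exp (-η * |(n:ℝ) - (m:ℝ)|) := by rw [neg_mul]

end
end

section
/- Let B₁, …, B_K be independent random matrices on a probability space (Ω, P), each taking values in SL(2,ℂ), and suppose p₀ ∈ (0,1) and r ≥ 1 are such that P(‖B_j‖² ≥ r) ≥ p₀ for each j = 1, …, K. Set T_j = B_j ⋯ B₁ for 1 ≤ j ≤ K and T₀ = 1. Then P( max_{0 ≤ j ≤ K} ‖T_j‖² ≥ r^{1/2} ) ≥ 1 − (1 − p₀)^K. -/
open MeasureTheory ProbabilityTheory

noncomputable section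

/-- Matrices are measurable entrywise. -/
instance : MeasurableSpace (Matrix (Fin 2) (Fin 2) ℂ) :=
  (inferInstance : MeasurableSpace (Fin 2 → Fin 2 → ℂ))

/-- The operator norm of a 2×2 complex matrix (acting on the Euclidean space `ℂ²`). -/
def opNorm2 (A : Matrix (Fin 2) (Fin 2) ℂ) : ℝ :=
  ‖LinearMap.toContinuousLinearMap (Matrix.toEuclideanLin A)‖

/-- The ordered partial products `T_j = B_{j-1} ⋯ B_0` (so `T_0 = 1`). -/
def prodUpTo {Ω : Type*} (B : ℕ → Ω → Matrix (Fin 2) (Fin 2) ℂ) (ω : Ω) :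
    ℕ → Matrix (Fin 2) (Fin 2) ℂ
  | 0 => 1
  | j + 1 => B j ω * prodUpTo B ω j

section Aux

open scoped Matrix.Norms.L2Operator
open Matrix

instance : OpensMeasurableSpace (Matrix (Fin 2) (Fin 2) ℂ) :=
  (inferInstance : OpensMeasurableSpace (Fin 2 → Fin 2 → ℂ))

private abbrev M2 := Matrix (Fin 2) (Fin 2) ℂ

lemma opNorm2_eq_l2 (A : M2) : opNorm2 A = ‖A‖ := rfl

lemma opNorm2_measurable : Measurable opNorm2 := by
  have h : Continuous fun A : M2 =>
      (Matrix.toEuclideanLin ≪≫ₗ LinearMap.toContinuousLinearMap) A :=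
    LinearMap.continuous_of_finiteDimensional _
  exact h.norm.measurable

lemma norm_map_star_le (A : M2) : ‖A.map star‖ ≤ ‖A‖ := by
  rw [Matrix.l2_opNorm_def]
  refine ContinuousLinearMap.opNorm_le_bound _ (norm_nonneg A) fun x => ?_
  set y : EuclideanSpace ℂ (Fin 2) :=
    (WithLp.equiv 2 (Fin 2 → ℂ)).symm (star (WithLp.equiv 2 (Fin 2 → ℂ) x)) with hy
  have hyx : ‖y‖ = ‖x‖ := by
    rw [EuclideanSpace.norm_eq, EuclideanSpace.norm_eq]
    simp [hy]
  have key : (Matrix.toEuclideanLin (A.map star)).toContinuousLinearMap x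
      = (EuclideanSpace.equiv (Fin 2) ℂ).symm
          (star (A.mulVec (WithLp.equiv 2 (Fin 2 → ℂ) y))) := by
    apply (WithLp.equiv 2 (Fin 2 → ℂ)).injective
    funext i
    simp [Matrix.toEuclideanLin_apply, Matrix.mulVec, dotProduct, hy,
      Fin.sum_univ_two, mul_comm]
    fin_cases i <;> simp <;> ring
  calc ‖(Matrix.toEuclideanLin ≪≫ₗ LinearMap.toContinuousLinearMap) (A.map star) x‖
      = ‖(EuclideanSpace.equiv (Fin 2) ℂ).symm
          (star (A.mulVec (WithLp.equiv 2 (Fin 2 → ℂ) y)))‖ := by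
        rw [← key]; rfl
    _ = ‖(EuclideanSpace.equiv (Fin 2) ℂ).symm
          (A.mulVec (WithLp.equiv 2 (Fin 2 → ℂ) y))‖ := by
        rw [EuclideanSpace.norm_eq, EuclideanSpace.norm_eq]; simp
    _ ≤ ‖A‖ * ‖y‖ := Matrix.l2_opNorm_mulVec A y
    _ = ‖A‖ * ‖x‖ := by rw [hyx]

lemma norm_transpose_le (A : M2) : ‖Aᵀ‖ ≤ ‖A‖ := by
  have h : Aᵀ = (A.map star)ᴴ := by
    ext i j; simp [Matrix.conjTranspose_apply]
  rw [h, Matrix.l2_opNorm_conjTranspose]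
  exact norm_map_star_le A

lemma norm_J_le : ‖(!![0, 1; -1, 0] : M2)‖ ≤ 1 := by
  rw [Matrix.l2_opNorm_def]
  refine ContinuousLinearMap.opNorm_le_bound _ zero_le_one fun x => ?_
  have key : ‖(Matrix.toEuclideanLin ≪≫ₗ LinearMap.toContinuousLinearMap)
      (!![0, 1; -1, 0] : M2) x‖ = ‖x‖ := by
    rw [show ((Matrix.toEuclideanLin ≪≫ₗ LinearMap.toContinuousLinearMap)
        (!![0, 1; -1, 0] : M2) x : EuclideanSpace ℂ (Fin 2))
      = (WithLp.equiv 2 (Fin 2 → ℂ)).symm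
          ((!![0, 1; -1, 0] : M2).mulVec (WithLp.equiv 2 (Fin 2 → ℂ) x)) from rfl]
    rw [EuclideanSpace.norm_eq, EuclideanSpace.norm_eq]
    congr 1
    simp [Matrix.mulVec, dotProduct, Fin.sum_univ_two]
    ring
  rw [key, one_mul]

lemma norm_J'_le : ‖(!![0, -1; 1, 0] : M2)‖ ≤ 1 := by
  rw [Matrix.l2_opNorm_def]
  refine ContinuousLinearMap.opNorm_le_bound _ zero_le_one fun x => ?_
  have key : ‖(Matrix.toEuclideanLin ≪≫ₗ LinearMap.toContinuousLinearMap)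
      (!![0, -1; 1, 0] : M2) x‖ = ‖x‖ := by
    rw [show ((Matrix.toEuclideanLin ≪≫ₗ LinearMap.toContinuousLinearMap)
        (!![0, -1; 1, 0] : M2) x : EuclideanSpace ℂ (Fin 2))
      = (WithLp.equiv 2 (Fin 2 → ℂ)).symm
          ((!![0, -1; 1, 0] : M2).mulVec (WithLp.equiv 2 (Fin 2 → ℂ) x)) from rfl]
    rw [EuclideanSpace.norm_eq, EuclideanSpace.norm_eq]
    congr 1
    simp [Matrix.mulVec, dotProduct, Fin.sum_univ_two]
    ring
  rw [key, one_mul]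

lemma adjugate_eq_aux (A : M2) :
    A.adjugate = !![0, 1; -1, 0] * Aᵀ * !![0, -1; 1, 0] := by
  rw [Matrix.adjugate_fin_two]
  ext i j
  fin_cases i <;> fin_cases j <;>
    simp [Matrix.mul_apply, Matrix.vecMul, dotProduct, Fin.sum_univ_two]

lemma norm_inv_le (A : M2) (h : A.det = 1) : ‖A⁻¹‖ ≤ ‖A‖ := by
  rw [Matrix.inv_def, h, Ring.inverse_one, one_smul, adjugate_eq_aux]
  calc ‖!![0, 1; -1, 0] * Aᵀ * !![0, -1; 1, 0]‖
      ≤ ‖(!![0, 1; -1, 0] : M2) * Aᵀ‖ * ‖(!![0, -1; 1, 0] : M2)‖ :=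
        Matrix.l2_opNorm_mul _ _
    _ ≤ (‖(!![0, 1; -1, 0] : M2)‖ * ‖Aᵀ‖) * ‖(!![0, -1; 1, 0] : M2)‖ := by
        apply mul_le_mul_of_nonneg_right (Matrix.l2_opNorm_mul _ _) (norm_nonneg _)
    _ ≤ (1 * ‖A‖) * 1 := by
        exact mul_le_mul (mul_le_mul norm_J_le (norm_transpose_le A) (norm_nonneg _)
          zero_le_one) norm_J'_le (norm_nonneg _) (by positivity)
    _ = ‖A‖ := by ring

lemma det_prodUpTo {Ω : Type*} (B : ℕ → Ω → M2) (ω : Ω) (n : ℕ)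
    (h : ∀ i, i < n → (B i ω).det = 1) : (prodUpTo B ω n).det = 1 := by
  induction n with
  | zero => simp [prodUpTo]
  | succ k ih =>
      rw [prodUpTo, Matrix.det_mul, h k (Nat.lt_succ_self k),
        ih (fun i hi => h i (hi.trans (Nat.lt_succ_self k))), one_mul]

/-- Deterministic step: if some block matrix is large, some partial product is large. -/
lemma det_step {Ω : Type*} (B : ℕ → Ω → M2) (ω : Ω) (K : ℕ)
    (hSL : ∀ j, j < K → (B j ω).det = 1) (j : ℕ) (hj : j < K) (r : ℝ) (hr : 1 ≤ r)
    (hB : r ≤ opNorm2 (B j ω) ^ 2) :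
    Real.sqrt r ≤ ⨆ i : Fin (K + 1), opNorm2 (prodUpTo B ω i) ^ 2 := by
  set T := prodUpTo B ω j with hT
  set T' := prodUpTo B ω (j + 1) with hT'
  have hdetT : T.det = 1 :=
    det_prodUpTo B ω j (fun i hi => hSL i (hi.trans hj))
  have hTinv : B j ω = T' * T⁻¹ := by
    rw [hT', prodUpTo, mul_assoc, Matrix.mul_nonsing_inv T (by rw [hdetT]; exact isUnit_one),
      mul_one]
  have hmul : opNorm2 (B j ω) ≤ opNorm2 T' * opNorm2 T := by
    rw [hTinv, opNorm2_eq_l2, opNorm2_eq_l2, opNorm2_eq_l2]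
    calc ‖T' * T⁻¹‖ ≤ ‖T'‖ * ‖T⁻¹‖ := Matrix.l2_opNorm_mul _ _
      _ ≤ ‖T'‖ * ‖T‖ := mul_le_mul_of_nonneg_left (norm_inv_le T hdetT) (norm_nonneg _)
  set m : ℝ := max (opNorm2 T ^ 2) (opNorm2 T' ^ 2) with hm
  have hm0 : 0 ≤ m := le_trans (sq_nonneg _) (le_max_left _ _)
  have hrm : r ≤ m ^ 2 := by
    calc r ≤ opNorm2 (B j ω) ^ 2 := hB
      _ ≤ (opNorm2 T' * opNorm2 T) ^ 2 := by
          apply pow_le_pow_left₀ (norm_nonneg _) hmul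
      _ = (opNorm2 T' ^ 2) * (opNorm2 T ^ 2) := by ring
      _ ≤ m * m :=
          mul_le_mul (le_max_right _ _) (le_max_left _ _) (sq_nonneg _) hm0
      _ = m ^ 2 := by ring
  have hsq : Real.sqrt r ≤ m := by
    calc Real.sqrt r ≤ Real.sqrt (m ^ 2) := Real.sqrt_le_sqrt hrm
      _ = m := Real.sqrt_sq hm0
  refine hsq.trans ?_
  have hbdd : BddAbove (Set.range fun i : Fin (K + 1) => opNorm2 (prodUpTo B ω i) ^ 2) :=
    Set.Finite.bddAbove (Set.finite_range _)
  rcases max_cases (opNorm2 T ^ 2) (opNorm2 T' ^ 2) with ⟨he, _⟩ | ⟨he, _⟩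
  · rw [hm, he, hT]
    exact le_ciSup hbdd (⟨j, hj.trans (Nat.lt_succ_self K)⟩ : Fin (K + 1))
  · rw [hm, he, hT']
    exact le_ciSup hbdd (⟨j + 1, Nat.succ_lt_succ hj⟩ : Fin (K + 1))

end Aux

/-- if independent `SL(2,ℂ)`-valued random matrices `B_1,…,B_K` each satisfy
`P(‖B_j‖² ≥ r) ≥ p₀`, then the partial products satisfy
`P(max_{0≤j≤K} ‖T_j‖² ≥ r^{1/2}) ≥ 1 - (1-p₀)^K`. -/
theorem stmt9 {Ω : Type*} [MeasurableSpace Ω] (P : Measure Ω) [IsProbabilityMeasure P]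
    (K : ℕ) (B : ℕ → Ω → Matrix (Fin 2) (Fin 2) ℂ)
    (hmeas : ∀ j, j < K → Measurable (B j))
    (hindep : iIndepFun (fun j : Fin K => B j) P)
    (hSL : ∀ j, j < K → ∀ ω, (B j ω).det = 1)
    (p₀ r : ℝ) (hp₀ : 0 < p₀) (hp₀' : p₀ < 1) (hr : 1 ≤ r)
    (hp : ∀ j, j < K → p₀ ≤ (P {ω | r ≤ opNorm2 (B j ω) ^ 2}).toReal) :
    1 - (1 - p₀) ^ K ≤
      (P {ω | Real.sqrt r ≤ ⨆ j : Fin (K + 1), opNorm2 (prodUpTo B ω j) ^ 2}).toReal := by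
  classical
  set S : Set (Matrix (Fin 2) (Fin 2) ℂ) := {M | r ≤ opNorm2 M ^ 2} with hSdef
  have hS : MeasurableSet S := by
    have : S = (fun M => opNorm2 M ^ 2) ⁻¹' Set.Ici r := rfl
    rw [this]
    exact ((opNorm2_measurable.pow_const 2)) measurableSet_Ici
  set A : Fin K → Set Ω := fun j => B j ⁻¹' S with hAdef
  -- each event is measurable and has probability ≥ p₀
  have hAmeas : ∀ j : Fin K, MeasurableSet (A j) := fun j => (hmeas j j.2) hS
  have hAp : ∀ j : Fin K, p₀ ≤ (P (A j)).toReal := fun j => hp j j.2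
  -- independence: the complements multiply
  have hint : P (⋂ j : Fin K, (A j)ᶜ) = ∏ j : Fin K, P ((A j)ᶜ) := by
    refine hindep.meas_iInter fun j => ?_
    exact ⟨Sᶜ, hS.compl, rfl⟩
  -- bound the product
  have hcompl_le : ∀ j : Fin K, (P ((A j)ᶜ)).toReal ≤ 1 - p₀ := by
    intro j
    rw [prob_compl_eq_one_sub (hAmeas j)]
    have h1 : (P (A j)).toReal ≤ 1 := by
      rw [← ENNReal.toReal_one]
      exact ENNReal.toReal_mono (by simp) prob_le_one
    rw [ENNReal.toReal_sub_of_le prob_le_one (by simp), ENNReal.toReal_one]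
    linarith [hAp j]
  have hprod : (P (⋂ j : Fin K, (A j)ᶜ)).toReal ≤ (1 - p₀) ^ K := by
    rw [hint, ENNReal.toReal_prod]
    calc ∏ j : Fin K, (P ((A j)ᶜ)).toReal
        ≤ ∏ _j : Fin K, (1 - p₀) :=
          Finset.prod_le_prod (fun j _ => ENNReal.toReal_nonneg) (fun j _ => hcompl_le j)
      _ = (1 - p₀) ^ K := by simp
  -- the union has large probability
  have hunion : 1 - (1 - p₀) ^ K ≤ (P (⋃ j : Fin K, A j)).toReal := by
    have hmeasInter : MeasurableSet (⋂ j : Fin K, (A j)ᶜ) :=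
      MeasurableSet.iInter fun j => (hAmeas j).compl
    have hUc : (⋃ j : Fin K, A j) = (⋂ j : Fin K, (A j)ᶜ)ᶜ := by
      simp [Set.compl_iInter]
    rw [hUc, prob_compl_eq_one_sub hmeasInter,
      ENNReal.toReal_sub_of_le prob_le_one (by simp), ENNReal.toReal_one]
    linarith [hprod]
  -- the union is contained in the target event
  have hsub : (⋃ j : Fin K, A j) ⊆
      {ω | Real.sqrt r ≤ ⨆ j : Fin (K + 1), opNorm2 (prodUpTo B ω j) ^ 2} := by
    intro ω hω
    rcases Set.mem_iUnion.1 hω with ⟨j, hj⟩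
    exact det_step B ω K (fun i hi => hSL i hi ω) j.1 j.2 r hr hj
  refine hunion.trans (ENNReal.toReal_mono (measure_ne_top P _) (measure_mono hsub))

end
end

section
/- Let μ be a positive Borel measure on ℝ and E ∈ ℝ such that μ([E−ε, E+ε]) < Cε for all ε > 0. Then for every δ > 0 and every ε₀ > 0: ∫₀^{ε₀} Im B_μ(E + ε + iδ) dε < π² C ε₀. -/
open MeasureTheory Set

private lemma ofReal_integral_le' {α : Type*} [MeasurableSpace α] (ν : Measure α) (F : α → ℝ)
    (hF : ∀ x, 0 ≤ F x) :
    ENNReal.ofReal (∫ x, F x ∂ν) ≤ ∫⁻ x, ENNReal.ofReal (F x) ∂ν := by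
  calc ENNReal.ofReal (∫ x, F x ∂ν) ≤ ‖∫ x, F x ∂ν‖ₑ := Real.ofReal_le_enorm _
    _ ≤ ∫⁻ x, ‖F x‖ₑ ∂ν := enorm_integral_le_lintegral_enorm _
    _ = ∫⁻ x, ENNReal.ofReal (F x) ∂ν := lintegral_congr fun x => Real.enorm_eq_ofReal (hF x)

private lemma ofReal_min' (a b : ℝ) :
    ENNReal.ofReal (min a b) = min (ENNReal.ofReal a) (ENNReal.ofReal b) := by
  rcases le_total a b with h | h <;>
    simp [min_eq_left, min_eq_right, h, ENNReal.ofReal_le_ofReal h]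

private lemma stmt13_pi_bound (E δ ε₀ : ℝ) (hδ : 0 < δ) (hε₀ : 0 < ε₀) (e : ℝ) :
    ∫⁻ ε in Ioc 0 ε₀, ENNReal.ofReal (δ / ((e - E - ε) ^ 2 + δ ^ 2))
      ≤ ENNReal.ofReal Real.pi := by
  have hcont : Continuous (fun ε : ℝ => δ / ((e - E - ε) ^ 2 + δ ^ 2)) := by
    apply continuous_const.div
    · fun_prop
    · intro x; positivity
  have hint : IntegrableOn (fun ε : ℝ => δ / ((e - E - ε) ^ 2 + δ ^ 2)) (Ioc 0 ε₀) :=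
    hcont.integrableOn_Ioc
  rw [← ofReal_integral_eq_lintegral_ofReal hint (ae_of_all _ fun x => by positivity)]
  apply ENNReal.ofReal_le_ofReal
  rw [← intervalIntegral.integral_of_le hε₀.le]
  have hFTC : ∫ ε in (0:ℝ)..ε₀, δ / ((e - E - ε) ^ 2 + δ ^ 2)
      = Real.arctan ((ε₀ - (e - E)) / δ) - Real.arctan ((0 - (e - E)) / δ) := by
    apply intervalIntegral.integral_eq_sub_of_hasDerivAt
    · intro x _
      have h1 : HasDerivAt (fun ε : ℝ => Real.arctan ((ε - (e - E)) / δ))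
          ((1 / (1 + ((x - (e - E)) / δ) ^ 2)) * (1 / δ)) x :=
        (Real.hasDerivAt_arctan _).comp x (((hasDerivAt_id x).sub_const _).div_const δ)
      refine h1.congr_deriv ?_
      have hδ' : δ ≠ 0 := ne_of_gt hδ
      field_simp
      ring
    · exact hcont.intervalIntegrable _ _
  rw [hFTC]
  have h1 := Real.arctan_lt_pi_div_two ((ε₀ - (e - E)) / δ)
  have h2 := Real.neg_pi_div_two_lt_arctan ((0 - (e - E)) / δ)
  linarith

private lemma stmt13_const_bound (E δ ε₀ : ℝ) (hδ : 0 < δ) (e : ℝ) :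
    ∫⁻ ε in Ioc 0 ε₀, ENNReal.ofReal (δ / ((e - E - ε) ^ 2 + δ ^ 2))
      ≤ ENNReal.ofReal (ε₀ * δ / ((Metric.infDist e (Icc E (E + ε₀))) ^ 2 + δ ^ 2)) := by
  set D := Metric.infDist e (Icc E (E + ε₀)) with hD
  have hDnn : 0 ≤ D := Metric.infDist_nonneg
  calc ∫⁻ ε in Ioc 0 ε₀, ENNReal.ofReal (δ / ((e - E - ε) ^ 2 + δ ^ 2))
      ≤ ∫⁻ _ in Ioc 0 ε₀, ENNReal.ofReal (δ / (D ^ 2 + δ ^ 2)) := by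
        apply setLIntegral_mono' measurableSet_Ioc
        intro x hx
        apply ENNReal.ofReal_le_ofReal
        have hmem : E + x ∈ Icc E (E + ε₀) := ⟨by linarith [hx.1], by linarith [hx.2]⟩
        have h1 : D ≤ |e - E - x| := by
          have := Metric.infDist_le_dist_of_mem (x := e) hmem
          rwa [Real.dist_eq, show e - (E + x) = e - E - x by ring] at this
        have h2 : D ^ 2 ≤ (e - E - x) ^ 2 := by
          rw [← sq_abs (e - E - x)]
          exact pow_le_pow_left₀ hDnn h1 2
        apply div_le_div_of_nonneg_left hδ.le (by positivity)
        linarith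
    _ = ENNReal.ofReal (δ / (D ^ 2 + δ ^ 2)) * volume (Ioc (0:ℝ) ε₀) := setLIntegral_const _ _
    _ = ENNReal.ofReal (ε₀ * δ / (D ^ 2 + δ ^ 2)) := by
        rw [Real.volume_Ioc, sub_zero, ← ENNReal.ofReal_mul (by positivity)]
        congr 1
        ring

private lemma stmt13_meas_bound (μ : Measure ℝ) (C E : ℝ)
    (hμ : ∀ ε : ℝ, 0 < ε → μ (Set.Icc (E - ε) (E + ε)) < ENNReal.ofReal (C * ε))
    (δ : ℝ) (hδ : 0 < δ) (ε₀ : ℝ) (hε₀ : 0 < ε₀) :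
    ∫⁻ s in Ioi (0:ℝ), μ {e | s < min Real.pi
        (ε₀ * δ / ((Metric.infDist e (Icc E (E + ε₀))) ^ 2 + δ ^ 2))}
      ≤ ∫⁻ s in Ioi (0:ℝ), (Ioo (0:ℝ) (min Real.pi (ε₀ / δ))).indicator
          (fun s => ENNReal.ofReal (C * (ε₀ + Real.sqrt (ε₀ * δ / s)))) s := by
  set M := min Real.pi (ε₀ / δ) with hM
  apply setLIntegral_mono' measurableSet_Ioi
  intro s hs
  replace hs : 0 < s := hs
  by_cases hsM : s < M
  · rw [Set.indicator_of_mem (show s ∈ Ioo 0 M from ⟨hs, hsM⟩)]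
    have hrpos : 0 < ε₀ + Real.sqrt (ε₀ * δ / s) := by positivity
    have hsub : {e | s < min Real.pi
        (ε₀ * δ / ((Metric.infDist e (Icc E (E + ε₀))) ^ 2 + δ ^ 2))}
          ⊆ Icc (E - (ε₀ + Real.sqrt (ε₀ * δ / s))) (E + (ε₀ + Real.sqrt (ε₀ * δ / s))) := by
      intro e he
      set D := Metric.infDist e (Icc E (E + ε₀)) with hD
      have hDnn : 0 ≤ D := Metric.infDist_nonneg
      have h2 : s < ε₀ * δ / (D ^ 2 + δ ^ 2) := lt_of_lt_of_le he (min_le_right _ _)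
      have hden : 0 < D ^ 2 + δ ^ 2 := by positivity
      have h3 : (D ^ 2 + δ ^ 2) * s < ε₀ * δ := by
        rw [lt_div_iff₀ hden] at h2
        linarith [h2]
      have h4 : D ^ 2 < ε₀ * δ / s := by
        rw [lt_div_iff₀ hs]
        nlinarith [sq_nonneg δ]
      have h5 : D < Real.sqrt (ε₀ * δ / s) := (Real.lt_sqrt hDnn).2 h4
      obtain ⟨y, hy, hdy⟩ := (Metric.infDist_lt_iff ⟨E, by constructor <;> linarith⟩).1 h5
      rw [Real.dist_eq] at hdy
      have h6 := abs_lt.1 hdy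
      have hy1 := hy.1
      have hy2 := hy.2
      have hsq : 0 ≤ Real.sqrt (ε₀ * δ / s) := Real.sqrt_nonneg _
      exact ⟨by linarith [h6.1], by linarith [h6.2]⟩
    calc μ _ ≤ μ (Icc (E - (ε₀ + Real.sqrt (ε₀ * δ / s)))
          (E + (ε₀ + Real.sqrt (ε₀ * δ / s)))) := measure_mono hsub
      _ ≤ ENNReal.ofReal (C * (ε₀ + Real.sqrt (ε₀ * δ / s))) := (hμ _ hrpos).le
  · rw [indicator_of_notMem (by simp [hsM, hs.le, mem_Ioo, not_and] : s ∉ Ioo 0 M)]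
    have hempty : {e | s < min Real.pi
        (ε₀ * δ / ((Metric.infDist e (Icc E (E + ε₀))) ^ 2 + δ ^ 2))} = ∅ := by
      apply eq_empty_of_forall_notMem
      intro e he
      push_neg at hsM
      set D := Metric.infDist e (Icc E (E + ε₀)) with hD
      have hDnn : 0 ≤ D := Metric.infDist_nonneg
      have h1 : ε₀ * δ / (D ^ 2 + δ ^ 2) ≤ ε₀ / δ := by
        have : ε₀ * δ / (D ^ 2 + δ ^ 2) ≤ ε₀ * δ / δ ^ 2 :=
          div_le_div_of_nonneg_left (by positivity) (by positivity) (by nlinarith)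
        calc ε₀ * δ / (D ^ 2 + δ ^ 2) ≤ ε₀ * δ / δ ^ 2 := this
          _ = ε₀ / δ := by field_simp
      have h2 : min Real.pi (ε₀ * δ / (D ^ 2 + δ ^ 2)) ≤ M :=
        min_le_min le_rfl h1
      have := he.trans_le h2
      exact absurd this (not_lt.2 hsM)
    rw [hempty]
    simp

private lemma stmt13_final (C δ ε₀ : ℝ) (hC : 0 < C) (hδ : 0 < δ) (hε₀ : 0 < ε₀) :
    ∫⁻ s in Ioi (0:ℝ), (Ioo (0:ℝ) (min Real.pi (ε₀ / δ))).indicator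
        (fun s => ENNReal.ofReal (C * (ε₀ + Real.sqrt (ε₀ * δ / s)))) s
      ≤ ENNReal.ofReal ((Real.pi + 2) * C * ε₀) := by
  set M := min Real.pi (ε₀ / δ) with hM
  have hMpos : 0 < M := lt_min Real.pi_pos (by positivity)
  rw [lintegral_indicator measurableSet_Ioo _, Measure.restrict_restrict measurableSet_Ioo,
    show Ioo (0:ℝ) M ∩ Ioi 0 = Ioo (0:ℝ) M from
      inter_eq_self_of_subset_left fun x hx => hx.1,
    Measure.restrict_congr_set Ioo_ae_eq_Ioc]
  have hptwise : ∀ s ∈ Ioc (0:ℝ) M,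
      ENNReal.ofReal (C * (ε₀ + Real.sqrt (ε₀ * δ / s)))
        = ENNReal.ofReal (C * ε₀)
          + ENNReal.ofReal (C * Real.sqrt (ε₀ * δ)) * ENNReal.ofReal (s ^ (-(1/2) : ℝ)) := by
    intro s hs
    have hs0 : 0 < s := hs.1
    have e1 : Real.sqrt (ε₀ * δ / s) = Real.sqrt (ε₀ * δ) * s ^ (-(1/2) : ℝ) := by
      rw [Real.sqrt_div (by positivity) s, Real.rpow_neg hs0.le, Real.sqrt_eq_rpow s,
        div_eq_mul_inv]
    rw [e1, ← ENNReal.ofReal_mul (by positivity), ← ENNReal.ofReal_add (by positivity)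
      (by positivity)]
    congr 1
    ring
  rw [setLIntegral_congr_fun measurableSet_Ioc hptwise]
  rw [lintegral_add_left measurable_const,
    lintegral_const_mul' _ _ ENNReal.ofReal_ne_top,
    setLIntegral_const, Real.volume_Ioc, sub_zero]
  have hrpint : ∫⁻ s in Ioc (0:ℝ) M, ENNReal.ofReal (s ^ (-(1/2) : ℝ))
      = ENNReal.ofReal (2 * Real.sqrt M) := by
    have hint : IntegrableOn (fun s : ℝ => s ^ (-(1/2) : ℝ)) (Ioc 0 M) :=
      (intervalIntegral.intervalIntegrable_rpow' (by norm_num)).1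
    rw [← ofReal_integral_eq_lintegral_ofReal hint ((ae_restrict_iff' measurableSet_Ioc).2
      (ae_of_all _ fun s hs => Real.rpow_nonneg hs.1.le _))]
    congr 1
    rw [← intervalIntegral.integral_of_le hMpos.le, integral_rpow (Or.inl (by norm_num))]
    rw [Real.sqrt_eq_rpow M]
    norm_num
    ring
  rw [hrpint, ← ENNReal.ofReal_mul (by positivity), ← ENNReal.ofReal_mul (by positivity),
    ← ENNReal.ofReal_add (by positivity) (by positivity)]
  apply ENNReal.ofReal_le_ofReal
  have hM1 : M ≤ Real.pi := min_le_left _ _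
  have hM2 : δ * M ≤ ε₀ := by
    have := min_le_right Real.pi (ε₀ / δ)
    calc δ * M ≤ δ * (ε₀ / δ) := by nlinarith
      _ = ε₀ := by field_simp
  have h3 : Real.sqrt (ε₀ * δ) * Real.sqrt M = Real.sqrt (ε₀ * δ * M) :=
    (Real.sqrt_mul (by positivity) _).symm
  have h4 : Real.sqrt (ε₀ * δ * M) ≤ ε₀ := by
    calc Real.sqrt (ε₀ * δ * M) ≤ Real.sqrt (ε₀ * ε₀) := Real.sqrt_le_sqrt (by nlinarith)
      _ = ε₀ := Real.sqrt_mul_self hε₀.le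
  have h5 : C * Real.sqrt (ε₀ * δ) * (2 * Real.sqrt M) ≤ 2 * C * ε₀ := by
    calc C * Real.sqrt (ε₀ * δ) * (2 * Real.sqrt M)
        = 2 * C * (Real.sqrt (ε₀ * δ) * Real.sqrt M) := by ring
      _ = 2 * C * Real.sqrt (ε₀ * δ * M) := by rw [h3]
      _ ≤ 2 * C * ε₀ := by nlinarith
  have h6 : C * ε₀ * M ≤ C * ε₀ * Real.pi :=
    mul_le_mul_of_nonneg_left hM1 (by positivity)
  nlinarith

/-- integrated bound on the Borel transform: if `μ([E-ε,E+ε]) < Cε` for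
all `ε > 0`, then `∫₀^{ε₀} Im B_μ(E+ε+iδ) dε < π² C ε₀`. -/
theorem stmt13 (μ : Measure ℝ) (C E : ℝ)
    (hμ : ∀ ε : ℝ, 0 < ε → μ (Set.Icc (E - ε) (E + ε)) < ENNReal.ofReal (C * ε))
    (δ : ℝ) (hδ : 0 < δ) (ε₀ : ℝ) (hε₀ : 0 < ε₀) :
    (∫ ε in (0:ℝ)..ε₀, ∫ e, δ / ((e - E - ε) ^ 2 + δ ^ 2) ∂μ)
      < Real.pi ^ 2 * C * ε₀ := by
  have hC : 0 < C := by
    by_contra hC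
    push_neg at hC
    have h1 := hμ 1 one_pos
    rw [mul_one, ENNReal.ofReal_eq_zero.2 hC] at h1
    exact ENNReal.not_lt_zero h1
  haveI hsf : SigmaFinite μ := by
    refine ⟨⟨⟨fun n => Icc (E - (n + 1)) (E + (n + 1)), fun _ => trivial, fun n => ?_, ?_⟩⟩⟩
    · exact (hμ (n + 1) (by positivity)).trans_le le_top
    · apply eq_univ_of_forall
      intro x
      obtain ⟨n, hn⟩ := exists_nat_ge |x - E|
      have h2 := abs_le.1 (hn.trans (by linarith : (n : ℝ) ≤ n + 1))
      exact mem_iUnion.2 ⟨n, ⟨by linarith [h2.1], by linarith [h2.2]⟩⟩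
  have hKnn : ∀ ε e : ℝ, 0 ≤ δ / ((e - E - ε) ^ 2 + δ ^ 2) := fun ε e => by positivity
  -- the whole chain, in ℝ≥0∞
  have main : ENNReal.ofReal (∫ ε in (0:ℝ)..ε₀, ∫ e, δ / ((e - E - ε) ^ 2 + δ ^ 2) ∂μ)
      ≤ ENNReal.ofReal ((Real.pi + 2) * C * ε₀) := by
    have hKcont : Continuous (fun p : ℝ × ℝ => δ / ((p.2 - E - p.1) ^ 2 + δ ^ 2)) := by
      apply continuous_const.div
      · fun_prop
      · intro p; positivity
    calc ENNReal.ofReal (∫ ε in (0:ℝ)..ε₀, ∫ e, δ / ((e - E - ε) ^ 2 + δ ^ 2) ∂μ)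
        = ENNReal.ofReal (∫ ε in Ioc (0:ℝ) ε₀, ∫ e, δ / ((e - E - ε) ^ 2 + δ ^ 2) ∂μ) := by
          rw [intervalIntegral.integral_of_le hε₀.le]
      _ ≤ ∫⁻ ε in Ioc (0:ℝ) ε₀, ENNReal.ofReal (∫ e, δ / ((e - E - ε) ^ 2 + δ ^ 2) ∂μ) :=
          ofReal_integral_le' _ _ fun ε => integral_nonneg fun e => hKnn ε e
      _ ≤ ∫⁻ ε in Ioc (0:ℝ) ε₀, ∫⁻ e, ENNReal.ofReal (δ / ((e - E - ε) ^ 2 + δ ^ 2)) ∂μ :=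
          lintegral_mono fun ε => ofReal_integral_le' _ _ fun e => hKnn ε e
      _ = ∫⁻ e, (∫⁻ ε in Ioc (0:ℝ) ε₀, ENNReal.ofReal (δ / ((e - E - ε) ^ 2 + δ ^ 2))) ∂μ := by
          exact lintegral_lintegral_swap (μ := volume.restrict (Ioc (0:ℝ) ε₀)) (ν := μ)
            (f := fun ε e => ENNReal.ofReal (δ / ((e - E - ε) ^ 2 + δ ^ 2)))
            (ENNReal.continuous_ofReal.comp hKcont).measurable.aemeasurable
      _ ≤ ∫⁻ e, ENNReal.ofReal (min Real.pi (ε₀ * δ / ((Metric.infDist e (Icc E (E + ε₀))) ^ 2 + δ ^ 2))) ∂μ := by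
          refine lintegral_mono (μ := μ)
            (f := fun e => ∫⁻ ε in Ioc (0:ℝ) ε₀, ENNReal.ofReal (δ / ((e - E - ε) ^ 2 + δ ^ 2)))
            (g := fun e => ENNReal.ofReal (min Real.pi (ε₀ * δ / ((Metric.infDist e (Icc E (E + ε₀))) ^ 2 + δ ^ 2)))) fun e => ?_
          simp only []
          rw [ofReal_min']
          exact le_min (stmt13_pi_bound E δ ε₀ hδ hε₀ e) (stmt13_const_bound E δ ε₀ hδ e)
      _ = ∫⁻ s in Ioi (0:ℝ), μ {e | s < min Real.pi
            (ε₀ * δ / ((Metric.infDist e (Icc E (E + ε₀))) ^ 2 + δ ^ 2))} := by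
          apply lintegral_eq_lintegral_meas_lt μ
            (f := fun e => min Real.pi (ε₀ * δ / ((Metric.infDist e (Icc E (E + ε₀))) ^ 2 + δ ^ 2)))
          · exact ae_of_all _ fun e => le_min Real.pi_pos.le (by positivity)
          · apply Continuous.aemeasurable
            apply continuous_const.min
            apply continuous_const.div
            · exact ((Metric.continuous_infDist_pt _).pow 2).add continuous_const
            · intro x; positivity
      _ ≤ ∫⁻ s in Ioi (0:ℝ), (Ioo (0:ℝ) (min Real.pi (ε₀ / δ))).indicator
            (fun s => ENNReal.ofReal (C * (ε₀ + Real.sqrt (ε₀ * δ / s)))) s :=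
          stmt13_meas_bound μ C E hμ δ hδ ε₀ hε₀
      _ ≤ ENNReal.ofReal ((Real.pi + 2) * C * ε₀) := stmt13_final C δ ε₀ hC hδ hε₀
  have hle : (∫ ε in (0:ℝ)..ε₀, ∫ e, δ / ((e - E - ε) ^ 2 + δ ^ 2) ∂μ) ≤ (Real.pi + 2) * C * ε₀ :=
    (ENNReal.ofReal_le_ofReal_iff (by positivity)).1 main
  have hpi : Real.pi + 2 < Real.pi ^ 2 := by nlinarith [Real.pi_gt_three]
  calc (∫ ε in (0:ℝ)..ε₀, ∫ e, δ / ((e - E - ε) ^ 2 + δ ^ 2) ∂μ) ≤ (Real.pi + 2) * C * ε₀ := hle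
    _ < Real.pi ^ 2 * C * ε₀ := by
        have hpos : 0 < C * ε₀ := mul_pos hC hε₀
        nlinarith
end

section
/- Let (H_ω)_{ω∈Ω} be a measurable family of Jacobi matrices over a probability space (Ω, P) whose averaged spectral measure ν(B) = E⟨δ₀, χ_B(H_ω) δ₀⟩ satisfies ν([−ε, ε]) ≤ C′ε for all ε > 0. Let q > 0, α > 0 and set η = min{q, 1/2}. Then there exists a constant C₁ such that for all T ≥ 2: Σ_{0 ≤ |n| ≤ T^{1+α}} |n|^q ∫₀^{T^{−η}} (dE/(πT)) · E|G_ω^{E+i/T}(0,n)|² ≤ C₁ · T^{q − η + αq}. -/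
open MeasureTheory Complex

noncomputable section

namespace Stmt19Aux

lemma norm_delta (n : ℤ) : ‖delta n‖ = 1 := by
  have := lp.norm_single (p := 2) (E := fun _ : ℤ => ℂ) (by norm_num)
    n (1:ℂ)
  simpa [delta] using this

lemma ring_inverse_neg {R : Type*} [Ring R] (a : R) :
    Ring.inverse (-a) = - Ring.inverse a := by
  by_cases h : IsUnit a
  · obtain ⟨u, rfl⟩ := h
    rw [← Units.val_neg, Ring.inverse_unit, Ring.inverse_unit, ← Units.val_neg, inv_neg]
  · rw [Ring.inverse_non_unit _ h, Ring.inverse_non_unit, neg_zero]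
    simpa using h

lemma isUnit_sub_smul {A : Ltwo →L[ℂ] Ltwo} (hA : IsSelfAdjoint A) {z : ℂ}
    (hz : z.im ≠ 0) : IsUnit (A - z • 1) := by
  have hz' : z ∉ spectrum ℂ A := by
    intro hmem
    exact hz (by rw [hA.mem_spectrum_eq_re hmem]; exact Complex.ofReal_im _)
  rw [spectrum.notMem_iff] at hz'
  have heq : algebraMap ℂ (Ltwo →L[ℂ] Ltwo) z - A = -(A - z • 1) := by
    rw [Algebra.algebraMap_eq_smul_one]; abel
  rw [heq] at hz'
  simpa using hz'.neg

lemma inner_self_isReal {A : Ltwo →L[ℂ] Ltwo} (hA : IsSelfAdjoint A) (φ : Ltwo) :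
    (inner (𝕜 := ℂ) φ (A φ)).im = 0 := by
  have hadj : ContinuousLinearMap.adjoint A = A := by
    rw [← ContinuousLinearMap.star_eq_adjoint]; exact hA
  have h : inner (𝕜 := ℂ) (A φ) φ = inner (𝕜 := ℂ) φ (A φ) := by
    conv_lhs => rw [← hadj]
    exact ContinuousLinearMap.adjoint_inner_left A φ φ
  have h2 : (starRingEnd ℂ) (inner (𝕜 := ℂ) φ (A φ)) = inner (𝕜 := ℂ) φ (A φ) := by
    rw [← inner_conj_symm] at h
    exact h
  exact Complex.conj_eq_iff_im.mp h2

lemma lower_bound {A : Ltwo →L[ℂ] Ltwo} (hA : IsSelfAdjoint A) (z : ℂ) (φ : Ltwo) :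
    |z.im| * ‖φ‖ ^ 2 ≤ ‖φ‖ * ‖(A - z • 1) φ‖ := by
  have h2 : (inner (𝕜 := ℂ) φ ((A - z • 1) φ)).im = -(z.im * ‖φ‖ ^ 2) := by
    have : inner (𝕜 := ℂ) φ ((A - z • 1) φ)
        = inner (𝕜 := ℂ) φ (A φ) - z * ((‖φ‖ ^ 2 : ℝ) : ℂ) := by
      rw [ContinuousLinearMap.sub_apply, ContinuousLinearMap.smul_apply,
        ContinuousLinearMap.one_apply, inner_sub_right, inner_smul_right,
        inner_self_eq_norm_sq_to_K]
      norm_cast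
    rw [this, Complex.sub_im, Complex.mul_im, Complex.ofReal_re, Complex.ofReal_im,
      inner_self_isReal hA φ]
    ring
  have h3 : |(inner (𝕜 := ℂ) φ ((A - z • 1) φ)).im| ≤ ‖φ‖ * ‖(A - z • 1) φ‖ := by
    refine le_trans (Complex.abs_im_le_norm _) ?_
    exact norm_inner_le_norm _ _
  rw [h2, abs_neg, abs_mul, _root_.abs_of_nonneg (sq_nonneg (‖φ‖))] at h3
  exact h3

lemma norm_resolvent_apply_le {A : Ltwo →L[ℂ] Ltwo} (hA : IsSelfAdjoint A) {z : ℂ}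
    (hz : z.im ≠ 0) (ψ : Ltwo) :
    ‖Ring.inverse (A - z • 1) ψ‖ ≤ ‖ψ‖ / |z.im| := by
  set R := Ring.inverse (A - z • 1) with hR
  have hu := isUnit_sub_smul hA hz
  have happ : (A - z • 1) (R ψ) = ψ := by
    have h1 : (A - z • 1) * R = 1 := Ring.mul_inverse_cancel _ hu
    calc (A - z • 1) (R ψ) = ((A - z • 1) * R) ψ := rfl
      _ = ψ := by rw [h1]; rfl
  have key := lower_bound hA z (R ψ)
  rw [happ] at key
  have hzpos : 0 < |z.im| := abs_pos.mpr hz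
  rcases eq_or_lt_of_le (norm_nonneg (R ψ)) with h0 | h0
  · rw [← h0]; positivity
  · rw [le_div_iff₀ hzpos]
    have := mul_le_mul_of_nonneg_left key (le_of_lt (inv_pos.mpr h0))
    calc ‖R ψ‖ * |z.im| = (‖R ψ‖)⁻¹ * (|z.im| * ‖R ψ‖ ^ 2) := by
          field_simp
      _ ≤ (‖R ψ‖)⁻¹ * (‖R ψ‖ * ‖ψ‖) := this
      _ = ‖ψ‖ := by field_simp

lemma norm_green_le {c C : ℝ} (J : JacobiMatrix c C) {z : ℂ} (hz : z.im ≠ 0) (n m : ℤ) :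
    ‖green J z n m‖ ≤ 1 / |z.im| := by
  calc ‖green J z n m‖ ≤ ‖delta n‖ * ‖Ring.inverse (J.H - z • 1) (delta m)‖ :=
        norm_inner_le_norm _ _
    _ ≤ 1 * (‖delta m‖ / |z.im|) := by
        rw [norm_delta n]
        exact mul_le_mul_of_nonneg_left (norm_resolvent_apply_le J.selfadj hz (delta m))
          zero_le_one
    _ = 1 / |z.im| := by rw [norm_delta m, one_mul]

lemma star_resolvent {A : Ltwo →L[ℂ] Ltwo} (hA : IsSelfAdjoint A) (z : ℂ) :
    star (Ring.inverse (A - z • 1)) = Ring.inverse (A - (starRingEnd ℂ z) • 1) := by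
  rw [← Ring.inverse_star]
  congr 1
  rw [star_sub, hA.star_eq, star_smul, star_one]
  rfl

set_option maxHeartbeats 1000000 in
lemma hasSum_green_sq {c C : ℝ} (J : JacobiMatrix c C) {z : ℂ} (hz : z.im ≠ 0) :
    HasSum (fun n : ℤ => ‖green J z 0 n‖ ^ 2) ((green J z 0 0).im / z.im) := by
  classical
  have hu := isUnit_sub_smul J.selfadj hz
  have hzc : (starRingEnd ℂ z).im ≠ 0 := by simpa using hz
  have hu' := isUnit_sub_smul J.selfadj hzc
  set R := Ring.inverse (J.H - z • 1) with hRdef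
  set φ := ContinuousLinearMap.adjoint R (delta 0) with hφ
  have hgreen : ∀ n : ℤ, green J z 0 n = (starRingEnd ℂ) ((φ : ∀ _ : ℤ, ℂ) n) := by
    intro n
    have h1 : green J z 0 n = inner (𝕜 := ℂ) φ (delta n) :=
      (ContinuousLinearMap.adjoint_inner_left R (delta n) (delta 0)).symm
    rw [h1, delta, lp.inner_single_right]
    simp
  have hnorm : ∀ n : ℤ, ‖green J z 0 n‖ = ‖(φ : ∀ _ : ℤ, ℂ) n‖ := by
    intro n; rw [hgreen n]; simp
  have hsum : HasSum (fun n : ℤ => ‖(φ : ∀ _ : ℤ, ℂ) n‖ ^ (2:ℝ)) (‖φ‖ ^ (2:ℝ)) := by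
    have h := lp.hasSum_norm (p := 2) (E := fun _ : ℤ => ℂ) (by norm_num) φ
    simpa using h
  have hsum2 : HasSum (fun n : ℤ => ‖(φ : ∀ _ : ℤ, ℂ) n‖ ^ (2:ℕ)) (‖φ‖ ^ (2:ℕ)) := by
    convert hsum using 2 with n
    · rw [← Real.rpow_natCast ‖(φ : ∀ _ : ℤ, ℂ) n‖ 2]; norm_num
    · rw [← Real.rpow_natCast ‖φ‖ 2]; norm_num
  set w := green J z 0 0 with hw
  have hstarR : star R = Ring.inverse (J.H - (starRingEnd ℂ z) • 1) :=
    star_resolvent J.selfadj z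
  have hsub : (J.H - (starRingEnd ℂ z) • 1) - (J.H - z • 1) = (z - starRingEnd ℂ z) • 1 := by
    rw [sub_smul]; abel
  have hRR : (z - starRingEnd ℂ z) • (R * star R) = R - star R := by
    have e1 : R * ((J.H - (starRingEnd ℂ z) • 1) * star R) = R := by
      rw [hstarR, Ring.mul_inverse_cancel _ hu', mul_one]
    have e2 : (R * (J.H - z • 1)) * star R = star R := by
      rw [hRdef, Ring.inverse_mul_cancel _ hu, one_mul]
    calc (z - starRingEnd ℂ z) • (R * star R)
        = R * (((z - starRingEnd ℂ z) • 1) * star R) := by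
          rw [smul_mul_assoc, one_mul, mul_smul_comm]
      _ = R * ((J.H - (starRingEnd ℂ z) • 1) - (J.H - z • 1)) * star R := by
          rw [hsub, mul_assoc]
      _ = R * ((J.H - (starRingEnd ℂ z) • 1) * star R) - (R * (J.H - z • 1)) * star R := by
          rw [mul_sub, sub_mul, mul_assoc, mul_assoc]
      _ = R - star R := by rw [e1, e2]
  have hzsub : z - starRingEnd ℂ z ≠ 0 := by
    rw [Complex.sub_conj]
    simp [Complex.ext_iff, hz]
  have hRR' : R * star R = (z - starRingEnd ℂ z)⁻¹ • (R - star R) := by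
    rw [← hRR, smul_smul, inv_mul_cancel₀ hzsub, one_smul]
  have hinner : (inner (𝕜 := ℂ) φ φ) = (w - starRingEnd ℂ w) / (z - starRingEnd ℂ z) := by
    have h1 : inner (𝕜 := ℂ) φ φ = inner (𝕜 := ℂ) (delta 0) (R φ) :=
      ContinuousLinearMap.adjoint_inner_left R φ (delta 0)
    have h2 : R φ = (R * star R) (delta 0) := by
      rw [ContinuousLinearMap.mul_apply, hφ, ContinuousLinearMap.star_eq_adjoint]
    have h3 : (R * star R) (delta 0)
        = (z - starRingEnd ℂ z)⁻¹ • ((R - star R) (delta 0)) := by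
      rw [hRR', ContinuousLinearMap.smul_apply]
    have h4 : inner (𝕜 := ℂ) (delta 0) ((R - star R) (delta 0)) = w - starRingEnd ℂ w := by
      rw [ContinuousLinearMap.sub_apply, inner_sub_right]
      congr 1
      rw [ContinuousLinearMap.star_eq_adjoint, ContinuousLinearMap.adjoint_inner_right,
        ← inner_conj_symm]
      rw [hw]
      rfl
    rw [h1, h2, h3, inner_smul_right, h4, div_eq_mul_inv, mul_comm]
  have hdiv : ((w.im / z.im : ℝ) : ℂ) = (w - starRingEnd ℂ w) / (z - starRingEnd ℂ z) := by
    rw [Complex.sub_conj, Complex.sub_conj]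
    have hzim : (z.im : ℂ) ≠ 0 := Complex.ofReal_ne_zero.mpr hz
    have hI := Complex.I_ne_zero
    push_cast
    field_simp
  have hval : (‖φ‖ : ℝ) ^ 2 = w.im / z.im := by
    have hC : ((‖φ‖ ^ 2 : ℝ) : ℂ) = ((w.im / z.im : ℝ) : ℂ) := by
      rw [hdiv, ← hinner, inner_self_eq_norm_sq_to_K]
      norm_cast
    exact_mod_cast hC
  rw [show (fun n : ℤ => ‖green J z 0 n‖ ^ 2) = fun n : ℤ => ‖(φ : ∀ _ : ℤ, ℂ) n‖ ^ 2 from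
    funext fun n => by rw [hnorm n], ← hval]
  exact hsum2

lemma continuous_green {c C : ℝ} (J : JacobiMatrix c C) (T : ℝ)
    (him : ∀ E : ℝ, ((E:ℂ) + Complex.I / (T:ℂ)).im ≠ 0) (n m : ℤ) :
    Continuous (fun E : ℝ => green J ((E:ℂ) + Complex.I / (T:ℂ)) n m) := by
  simp only [green]
  rw [continuous_iff_continuousAt]
  intro E₀
  have hu := isUnit_sub_smul J.selfadj (him E₀)
  have hc1 : Continuous (fun E : ℝ =>
      J.H - ((E:ℂ) + Complex.I / (T:ℂ)) • (1 : Ltwo →L[ℂ] Ltwo)) :=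
    continuous_const.sub ((Complex.continuous_ofReal.add continuous_const).smul
      continuous_const)
  obtain ⟨u, huu⟩ := hu
  have hc2 : ContinuousAt (Ring.inverse (M₀ := Ltwo →L[ℂ] Ltwo))
      (J.H - ((E₀:ℂ) + Complex.I / (T:ℂ)) • 1) := by
    rw [← huu]
    exact NormedRing.inverse_continuousAt u
  have hc3 : ContinuousAt ((Ring.inverse (M₀ := Ltwo →L[ℂ] Ltwo)) ∘ (fun E : ℝ =>
      J.H - ((E:ℂ) + Complex.I / (T:ℂ)) • (1 : Ltwo →L[ℂ] Ltwo))) E₀ :=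
    ContinuousAt.comp (g := Ring.inverse)
      (f := fun E : ℝ => J.H - ((E:ℂ) + Complex.I / (T:ℂ)) • (1 : Ltwo →L[ℂ] Ltwo))
      hc2 hc1.continuousAt
  have houter : Continuous (fun A : Ltwo →L[ℂ] Ltwo =>
      inner (𝕜 := ℂ) (delta n) (A (delta m))) :=
    Continuous.inner continuous_const ((ContinuousLinearMap.apply ℂ Ltwo (delta m)).continuous)
  exact houter.continuousAt.comp hc3

lemma integral_poisson_le {τ : ℝ} (hτ : 0 < τ) (e x y : ℝ) :
    ∫ E in x..y, ((E - e)^2 + τ^2)⁻¹ ≤ Real.pi / τ := by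
  have hderiv : ∀ E : ℝ, HasDerivAt (fun E : ℝ => τ⁻¹ * Real.arctan ((E - e) / τ))
      (((E - e)^2 + τ^2)⁻¹) E := by
    intro E
    have h1 : HasDerivAt (fun E : ℝ => (E - e) / τ) (1 / τ) E := by
      simpa using ((hasDerivAt_id E).sub_const e).div_const τ
    have h2 := (Real.hasDerivAt_arctan ((E - e) / τ)).comp E h1
    have h3 := h2.const_mul τ⁻¹
    refine h3.congr_deriv ?_
    field_simp
    ring
  have hint : IntervalIntegrable (fun E : ℝ => ((E - e)^2 + τ^2)⁻¹) volume x y := by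
    apply Continuous.intervalIntegrable
    have : ∀ E : ℝ, (E - e)^2 + τ^2 ≠ 0 := fun E => by positivity
    exact (((continuous_id.sub continuous_const).pow 2).add continuous_const).inv₀ this
  rw [intervalIntegral.integral_eq_sub_of_hasDerivAt (fun E _ => hderiv E) hint]
  have h1 : Real.arctan ((y - e) / τ) < Real.pi / 2 := Real.arctan_lt_pi_div_two _
  have h2 : -(Real.pi / 2) < Real.arctan ((x - e) / τ) := Real.neg_pi_div_two_lt_arctan _
  have hτ' : (0:ℝ) < τ⁻¹ := by positivity
  calc τ⁻¹ * Real.arctan ((y - e) / τ) - τ⁻¹ * Real.arctan ((x - e) / τ)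
      = τ⁻¹ * (Real.arctan ((y - e) / τ) - Real.arctan ((x - e) / τ)) := by ring
    _ ≤ τ⁻¹ * Real.pi := by
        apply mul_le_mul_of_nonneg_left _ hτ'.le
        linarith
    _ = Real.pi / τ := by rw [div_eq_mul_inv]; ring

end Stmt19Aux

set_option maxHeartbeats 1600000

/-- Lemma 9: the central-region bound
`Σ_{0≤|n|≤T^{1+α}} |n|^q ∫₀^{T^{-η}} (dE/(πT)) E|G_ω^{E+i/T}(0,n)|² ≤ C₁ T^{q-η+αq}`,
where `η = min{q,1/2}` and the averaged spectral measure `ν` (characterized by its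
Borel transform `B_ν(z) = E⟨δ₀,(z-H_ω)⁻¹δ₀⟩`) is Lipschitz at the energy `0`. -/
theorem stmt19 {Ω : Type*} [MeasurableSpace Ω] (P : Measure Ω) [IsProbabilityMeasure P]
    (c C : ℝ) (hc : 0 < c) (hcC : c ≤ C) (J : Ω → JacobiMatrix c C)
    (hmeas : ∀ (z : ℂ) (n m : ℤ), Measurable fun ω => green (J ω) z n m)
    (ν : Measure ℝ) [IsFiniteMeasure ν]
    (hν : ∀ z : ℂ, 0 < z.im →
      ∫ e : ℝ, (z - (e : ℂ))⁻¹ ∂ν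
        = ∫ ω, inner (𝕜 := ℂ) (delta 0) ((Ring.inverse (z • 1 - (J ω).H)) (delta 0)) ∂P)
    (C' : ℝ) (hC' : ∀ ε : ℝ, 0 < ε → ν (Set.Icc (-ε) ε) ≤ ENNReal.ofReal (C' * ε))
    (q α η : ℝ) (hq : 0 < q) (hα : 0 < α) (hη : η = min q (1 / 2)) :
    ∃ C₁ : ℝ, ∀ T : ℝ, 2 ≤ T →
      ∑' n : {k : ℤ // |(k : ℝ)| ≤ T ^ (1 + α)},
          |((n : ℤ) : ℝ)| ^ q * ∫ E in (0:ℝ)..(T ^ (-η)),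
            (∫ ω, ‖green (J ω) ((E : ℂ) + Complex.I / (T : ℂ)) 0 (n : ℤ)‖ ^ 2 ∂P)
              / (Real.pi * T)
        ≤ C₁ * T ^ (q - η + α * q) := by
  classical
  refine ⟨2 * max C' 0 + 2 / Real.pi, ?_⟩
  intro T hT
  have hT0 : (0:ℝ) < T := by linarith
  have hT1 : (1:ℝ) < T := by linarith
  have hTne : T ≠ 0 := ne_of_gt hT0
  have hπ := Real.pi_pos
  have hπT : 0 < Real.pi * T := by positivity
  set M := max C' 0 with hM
  have hMC : C' ≤ M := le_max_left _ _
  have hM0 : (0:ℝ) ≤ M := le_max_right _ _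
  have hη0 : 0 < η := by rw [hη]; exact lt_min hq (by norm_num)
  have hη2 : η ≤ 1/2 := hη ▸ min_le_right _ _
  set b := T ^ (-η) with hbdef
  have hb0 : 0 < b := Real.rpow_pos_of_pos hT0 _
  have hbne : b ≠ 0 := ne_of_gt hb0
  -- imaginary and real parts of the spectral parameter
  have him : ∀ E : ℝ, ((E:ℂ) + Complex.I / (T:ℂ)).im = T⁻¹ := by
    intro E
    rw [Complex.add_im, Complex.ofReal_im, zero_add, Complex.div_im]
    simp [Complex.normSq_ofReal]
  have himne : ∀ E : ℝ, ((E:ℂ) + Complex.I / (T:ℂ)).im ≠ 0 := by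
    intro E; rw [him E]; positivity
  have hre : ∀ E : ℝ, ((E:ℂ) + Complex.I / (T:ℂ)).re = E := by
    intro E
    rw [Complex.add_re, Complex.ofReal_re, Complex.div_re]
    simp
  have hgb : ∀ (zz : ℂ), zz.im ≠ 0 → ∀ (ω : Ω) (n m : ℤ),
      ‖green (J ω) zz n m‖ ≤ 1/|zz.im| :=
    fun zz h ω n m => Stmt19Aux.norm_green_le (J ω) h n m
  -- the ν-link: expectation of the imaginary part of the diagonal Green function
  have nulink : ∀ zz : ℂ, 0 < zz.im →
      ∫ ω, (green (J ω) zz 0 0).im ∂P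
        = ∫ e : ℝ, zz.im / ((zz.re - e)^2 + zz.im^2) ∂ν := by
    intro zz hzz
    have hzne : zz.im ≠ 0 := ne_of_gt hzz
    have hint : Integrable (fun ω => green (J ω) zz 0 0) P := by
      refine (integrable_const (1/|zz.im|)).mono' ((hmeas zz 0 0).aestronglyMeasurable) ?_
      filter_upwards with ω
      exact hgb zz hzne ω 0 0
    have hresneg : ∀ ω : Ω, inner (𝕜 := ℂ) (delta 0)
        ((Ring.inverse (zz • 1 - (J ω).H)) (delta 0)) = - green (J ω) zz 0 0 := by
      intro ω
      have h1 : zz • (1 : Ltwo →L[ℂ] Ltwo) - (J ω).H = -((J ω).H - zz • 1) := by abel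
      rw [green, h1, Stmt19Aux.ring_inverse_neg, ContinuousLinearMap.neg_apply,
        inner_neg_right]
    have h1 : ∫ ω, green (J ω) zz 0 0 ∂P = - ∫ e : ℝ, (zz - (e:ℂ))⁻¹ ∂ν := by
      rw [hν zz hzz,
        show (fun ω => inner (𝕜 := ℂ) (delta 0) ((Ring.inverse (zz • 1 - (J ω).H)) (delta 0)))
          = fun ω => - green (J ω) zz 0 0 from funext hresneg,
        integral_neg, neg_neg]
    have hb2 : Integrable (fun e : ℝ => (zz - (e:ℂ))⁻¹) ν := by
      have hcont : Continuous (fun e : ℝ => (zz - (e:ℂ))⁻¹) := by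
        apply Continuous.inv₀ (continuous_const.sub Complex.continuous_ofReal)
        intro e h
        apply hzne
        rw [show zz = (e:ℂ) from sub_eq_zero.mp h]
        exact Complex.ofReal_im e
      refine (integrable_const (zz.im)⁻¹).mono' hcont.aestronglyMeasurable ?_
      filter_upwards with e
      have h1 : zz.im ≤ ‖zz - (e:ℂ)‖ := by
        calc zz.im ≤ |(zz - (e:ℂ)).im| := by
              rw [Complex.sub_im, Complex.ofReal_im, sub_zero]; exact le_abs_self _
          _ ≤ ‖zz - (e:ℂ)‖ := Complex.abs_im_le_norm _
      rw [norm_inv]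
      exact inv_anti₀ hzz h1
    have himeq := integral_im (μ := P) hint
    have himeq2 := integral_im (μ := ν) hb2
    calc ∫ ω, (green (J ω) zz 0 0).im ∂P
        = (∫ ω, green (J ω) zz 0 0 ∂P).im := himeq
      _ = - (∫ e : ℝ, (zz - (e:ℂ))⁻¹ ∂ν).im := by rw [h1, Complex.neg_im]
      _ = - ∫ e : ℝ, ((zz - (e:ℂ))⁻¹).im ∂ν := congrArg Neg.neg himeq2.symm
      _ = ∫ e : ℝ, zz.im / ((zz.re - e)^2 + zz.im^2) ∂ν := by
          rw [← integral_neg]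
          apply integral_congr_ae
          filter_upwards with e
          rw [Complex.inv_im, Complex.normSq_apply, Complex.sub_re, Complex.sub_im,
            Complex.ofReal_re, Complex.ofReal_im, sub_zero, neg_div, neg_neg]
          ring_nf
  -- single-point Borel-transform bound
  have hνD : ∀ a : ℝ, 0 < a → (∫ e : ℝ, (e^2 + a^2)⁻¹ ∂ν) ≤ (a^2)⁻¹ := by
    intro a ha
    have hz : ((a:ℂ) * Complex.I).im = a := by simp
    have hz0 : 0 < ((a:ℂ) * Complex.I).im := by rw [hz]; exact ha
    have him0 : ((a:ℂ) * Complex.I).im ≠ 0 := ne_of_gt hz0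
    have hre0 : ((a:ℂ) * Complex.I).re = 0 := by simp
    have h1 := nulink _ hz0
    rw [hz, hre0] at h1
    have h2 : ∫ e : ℝ, a / ((0 - e)^2 + a^2) ∂ν = a * ∫ e : ℝ, (e^2 + a^2)⁻¹ ∂ν := by
      rw [← integral_const_mul]
      congr 1; funext e
      rw [zero_sub, neg_sq, div_eq_mul_inv]
    have h3 : ∫ ω, (green (J ω) ((a:ℂ)*Complex.I) 0 0).im ∂P ≤ a⁻¹ := by
      have hptw : ∀ ω : Ω, ‖(green (J ω) ((a:ℂ)*Complex.I) 0 0).im‖ ≤ a⁻¹ := by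
        intro ω
        have h := hgb _ him0 ω 0 0
        rw [hz, _root_.abs_of_pos ha, one_div] at h
        calc ‖(green (J ω) ((a:ℂ)*Complex.I) 0 0).im‖
            ≤ ‖green (J ω) ((a:ℂ)*Complex.I) 0 0‖ := by
              rw [Real.norm_eq_abs]; exact Complex.abs_im_le_norm _
          _ ≤ a⁻¹ := h
      have hint : Integrable (fun ω => (green (J ω) ((a:ℂ)*Complex.I) 0 0).im) P := by
        refine (integrable_const a⁻¹).mono'
          ((Complex.measurable_im.comp (hmeas _ 0 0)).aestronglyMeasurable) ?_
        filter_upwards with ω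
        exact hptw ω
      calc ∫ ω, (green (J ω) ((a:ℂ)*Complex.I) 0 0).im ∂P
          ≤ ∫ _ω : Ω, a⁻¹ ∂P := by
            apply integral_mono hint (integrable_const _)
            intro ω
            exact le_trans (le_abs_self _) (by simpa [Real.norm_eq_abs] using hptw ω)
        _ = a⁻¹ := by simp
    have h4 : a * ∫ e : ℝ, (e^2 + a^2)⁻¹ ∂ν ≤ a⁻¹ := by rw [← h2, ← h1]; exact h3
    have h5 := mul_le_mul_of_nonneg_left h4 (inv_pos.mpr ha).le
    calc (∫ e : ℝ, (e^2 + a^2)⁻¹ ∂ν) = a⁻¹ * (a * ∫ e : ℝ, (e^2 + a^2)⁻¹ ∂ν) := by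
          field_simp
      _ ≤ a⁻¹ * a⁻¹ := h5
      _ = (a^2)⁻¹ := by rw [sq, mul_inv]
  -- the key per-energy bound
  have hkey : ∀ (s : Finset ℤ) (E : ℝ),
      (∑ n ∈ s, ∫ ω, ‖green (J ω) ((E:ℂ) + Complex.I / (T:ℂ)) 0 n‖ ^ 2 ∂P)
        ≤ ∫ e : ℝ, ((E - e)^2 + (T⁻¹)^2)⁻¹ ∂ν := by
    intro s E
    have hzim : ((E:ℂ) + Complex.I / (T:ℂ)).im = T⁻¹ := him E
    have hzim0 : ((E:ℂ) + Complex.I / (T:ℂ)).im ≠ 0 := himne E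
    have hTipos : (0:ℝ) < T⁻¹ := by positivity
    have hintn : ∀ n : ℤ, Integrable
        (fun ω => ‖green (J ω) ((E:ℂ) + Complex.I / (T:ℂ)) 0 n‖ ^ 2) P := by
      intro n
      refine (integrable_const (T^2)).mono'
        (((hmeas _ 0 n).norm.pow_const 2).aestronglyMeasurable) ?_
      filter_upwards with ω
      have h := hgb _ hzim0 ω 0 n
      rw [hzim, _root_.abs_of_pos hTipos, one_div, inv_inv] at h
      rw [Real.norm_eq_abs, _root_.abs_of_nonneg (by positivity)]
      exact pow_le_pow_left₀ (norm_nonneg _) h 2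
    have himint : Integrable (fun ω => (green (J ω) ((E:ℂ) + Complex.I / (T:ℂ)) 0 0).im) P := by
      refine (integrable_const T).mono' ((Complex.measurable_im.comp
        (hmeas _ 0 0)).aestronglyMeasurable) ?_
      filter_upwards with ω
      have h := hgb _ hzim0 ω 0 0
      rw [hzim, _root_.abs_of_pos hTipos, one_div, inv_inv] at h
      calc ‖(green (J ω) ((E:ℂ) + Complex.I / (T:ℂ)) 0 0).im‖
          ≤ ‖green (J ω) ((E:ℂ) + Complex.I / (T:ℂ)) 0 0‖ := by
            rw [Real.norm_eq_abs]; exact Complex.abs_im_le_norm _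
        _ ≤ T := h
    have hmono : ∀ ω : Ω, (∑ n ∈ s, ‖green (J ω) ((E:ℂ) + Complex.I / (T:ℂ)) 0 n‖ ^ 2)
        ≤ (green (J ω) ((E:ℂ) + Complex.I / (T:ℂ)) 0 0).im * T := by
      intro ω
      have h := sum_le_hasSum s (fun n _ => sq_nonneg _)
        (Stmt19Aux.hasSum_green_sq (J ω) hzim0)
      rw [hzim, div_inv_eq_mul] at h
      exact h
    calc (∑ n ∈ s, ∫ ω, ‖green (J ω) ((E:ℂ) + Complex.I / (T:ℂ)) 0 n‖ ^ 2 ∂P)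
        = ∫ ω, ∑ n ∈ s, ‖green (J ω) ((E:ℂ) + Complex.I / (T:ℂ)) 0 n‖ ^ 2 ∂P :=
          (integral_finset_sum s (fun n _ => hintn n)).symm
      _ ≤ ∫ ω, (green (J ω) ((E:ℂ) + Complex.I / (T:ℂ)) 0 0).im * T ∂P :=
          integral_mono (integrable_finset_sum s fun n _ => hintn n)
            (himint.mul_const T) hmono
      _ = (∫ ω, (green (J ω) ((E:ℂ) + Complex.I / (T:ℂ)) 0 0).im ∂P) * T := by
          rw [integral_mul_const]
      _ = (∫ e : ℝ, T⁻¹ / ((E - e)^2 + (T⁻¹)^2) ∂ν) * T := by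
          rw [nulink _ (by rw [hzim]; exact hTipos), hzim, hre E]
      _ = ∫ e : ℝ, ((E - e)^2 + (T⁻¹)^2)⁻¹ ∂ν := by
          rw [← integral_mul_const]
          congr 1; funext e
          rw [div_mul_eq_mul_div, inv_mul_cancel₀ hTne, one_div]
  -- continuity in the energy variable of the averaged quantities
  have hFcont : ∀ n : ℤ, Continuous (fun E : ℝ =>
      ∫ ω, ‖green (J ω) ((E:ℂ) + Complex.I / (T:ℂ)) 0 n‖ ^ 2 ∂P) := by
    intro n
    refine continuous_of_dominated (bound := fun _ => T^2)
      (fun E => ((hmeas _ 0 n).norm.pow_const 2).aestronglyMeasurable) ?_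
      (integrable_const _) ?_
    · intro E
      filter_upwards with ω
      have h := hgb _ (himne E) ω 0 n
      rw [him E, _root_.abs_of_pos (by positivity : (0:ℝ) < T⁻¹), one_div, inv_inv] at h
      rw [Real.norm_eq_abs, _root_.abs_of_nonneg (by positivity)]
      exact pow_le_pow_left₀ (norm_nonneg _) h 2
    · filter_upwards with ω
      exact (Stmt19Aux.continuous_green (J ω) T himne 0 n).norm.pow 2
  have hGcont : Continuous (fun E : ℝ => ∫ e : ℝ, ((E - e)^2 + (T⁻¹)^2)⁻¹ ∂ν) := by
    refine continuous_of_dominated (bound := fun _ => ((T⁻¹)^2)⁻¹) ?_ ?_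
      (integrable_const _) ?_
    · intro E
      exact ((((continuous_const.sub continuous_id).pow 2).add continuous_const).inv₀
        (fun e => by dsimp; positivity)).aestronglyMeasurable
    · intro E
      filter_upwards with e
      rw [Real.norm_eq_abs, _root_.abs_of_nonneg (by positivity)]
      apply inv_anti₀ (by positivity)
      nlinarith [sq_nonneg (E - e)]
    · filter_upwards with e
      exact (((continuous_id.sub continuous_const).pow 2).add continuous_const).inv₀
        (fun E => by dsimp; positivity)
  -- Fubini
  haveI hres : IsFiniteMeasure (volume.restrict (Set.Ioc (0:ℝ) b)) := by
    constructor
    rw [Measure.restrict_apply_univ]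
    exact measure_Ioc_lt_top
  have hswap : (∫ E in (0:ℝ)..b, ∫ e : ℝ, ((E - e)^2 + (T⁻¹)^2)⁻¹ ∂ν)
      = ∫ e : ℝ, (∫ E in (0:ℝ)..b, ((E - e)^2 + (T⁻¹)^2)⁻¹) ∂ν := by
    rw [intervalIntegral.integral_of_le hb0.le]
    have hintu : Integrable (Function.uncurry fun (E e : ℝ) => ((E - e)^2 + (T⁻¹)^2)⁻¹)
        ((volume.restrict (Set.Ioc (0:ℝ) b)).prod ν) := by
      have hcont : Continuous (Function.uncurry fun (E e : ℝ) => ((E - e)^2 + (T⁻¹)^2)⁻¹) := by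
        apply Continuous.inv₀
        · exact ((continuous_fst.sub continuous_snd).pow 2).add continuous_const
        · intro p; positivity
      refine (integrable_const (((T⁻¹)^2)⁻¹)).mono' hcont.aestronglyMeasurable ?_
      filter_upwards with p
      show ‖((p.1 - p.2)^2 + (T⁻¹)^2)⁻¹‖ ≤ ((T⁻¹)^2)⁻¹
      rw [Real.norm_eq_abs, _root_.abs_of_nonneg (by positivity)]
      apply inv_anti₀ (by positivity)
      nlinarith [sq_nonneg (p.1 - p.2)]
    rw [MeasureTheory.integral_integral_swap hintu]
    congr 1
    funext e
    rw [intervalIntegral.integral_of_le hb0.le]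
  -- pointwise bound on the inner energy integral
  have hK : ∀ e : ℝ, (∫ E in (0:ℝ)..b, ((E - e)^2 + (T⁻¹)^2)⁻¹)
      ≤ Set.indicator (Set.Icc (-(2*b)) (2*b)) (fun _ => Real.pi * T) e
        + 8 * b * (e^2 + (2*b)^2)⁻¹ := by
    intro e
    by_cases hcase : |e| ≤ 2*b
    · have h1 : e ∈ Set.Icc (-(2*b)) (2*b) := by
        rw [Set.mem_Icc]
        exact abs_le.mp hcase
      rw [Set.indicator_of_mem h1]
      have h2 := Stmt19Aux.integral_poisson_le (by positivity : (0:ℝ) < T⁻¹) e 0 b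
      rw [div_inv_eq_mul] at h2
      have h3 : (0:ℝ) ≤ 8*b*(e^2+(2*b)^2)⁻¹ := by positivity
      linarith
    · push_neg at hcase
      have h1 : e ∉ Set.Icc (-(2*b)) (2*b) := by
        rw [Set.mem_Icc]
        intro hmem
        exact absurd (abs_le.mpr hmem) (not_le.mpr hcase)
      rw [Set.indicator_of_notMem h1, zero_add]
      have he0 : (0:ℝ) < |e| := lt_trans (by positivity) hcase
      have he2 : (0:ℝ) < e^2 := by
        rw [← _root_.sq_abs]; positivity
      have hbound : ∀ E ∈ Set.uIoc (0:ℝ) b, ‖((E - e)^2 + (T⁻¹)^2)⁻¹‖ ≤ 4 / e^2 := by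
        intro E hE
        rw [Set.uIoc_of_le hb0.le] at hE
        obtain ⟨hE1, hE2⟩ := hE
        have hEe : |e| / 2 ≤ |E - e| := by
          rw [abs_sub_comm]
          calc |e|/2 ≤ |e| - b := by linarith
            _ ≤ |e| - |E| := by
                have : |E| ≤ b := by rw [_root_.abs_of_pos hE1]; exact hE2
                linarith
            _ ≤ |e - E| := abs_sub_abs_le_abs_sub e E
        have h2 : e^2/4 ≤ (E - e)^2 := by
          calc e^2/4 = (|e|/2)^2 := by rw [div_pow, _root_.sq_abs]; norm_num
            _ ≤ |E - e|^2 := pow_le_pow_left₀ (by positivity) hEe 2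
            _ = (E - e)^2 := _root_.sq_abs _
        rw [Real.norm_eq_abs, _root_.abs_of_nonneg (by positivity),
          show (4:ℝ)/e^2 = (e^2/4)⁻¹ by rw [inv_div]]
        apply inv_anti₀ (by positivity)
        nlinarith [sq_nonneg (T⁻¹)]
      have h2 := intervalIntegral.norm_integral_le_of_norm_le_const hbound
      rw [sub_zero, _root_.abs_of_pos hb0] at h2
      have h3 : (∫ E in (0:ℝ)..b, ((E - e)^2 + (T⁻¹)^2)⁻¹) ≤ 4/e^2 * b :=
        le_trans (le_abs_self _) (by rwa [← Real.norm_eq_abs])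
      have h4 : 4/e^2*b ≤ 8*b*(e^2+(2*b)^2)⁻¹ := by
        have hsq : (2*b)^2 ≤ e^2 := by
          rw [← _root_.sq_abs e]
          exact pow_le_pow_left₀ (by positivity) hcase.le 2
        rw [show (4:ℝ)/e^2*b = 4*b/e^2 by ring, show (8:ℝ)*b*(e^2+(2*b)^2)⁻¹
          = 8*b/(e^2+(2*b)^2) by rw [div_eq_mul_inv], div_le_div_iff₀ he2 (by positivity)]
        nlinarith [hb0.le]
      linarith
  -- integrating the bound against ν
  have hIcc : (ν (Set.Icc (-(2*b)) (2*b))).toReal ≤ M * (2*b) := by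
    have h1 := hC' (2*b) (by positivity)
    have h2 : ν (Set.Icc (-(2*b)) (2*b)) ≤ ENNReal.ofReal (M * (2*b)) :=
      le_trans h1 (ENNReal.ofReal_le_ofReal (by nlinarith))
    exact ENNReal.toReal_le_of_le_ofReal (by positivity) h2
  have htail_int : Integrable (fun e : ℝ => 8 * b * (e^2 + (2*b)^2)⁻¹) ν := by
    refine (integrable_const (8*b*((2*b)^2)⁻¹)).mono' ?_ ?_
    · exact (continuous_const.mul (((continuous_pow 2).add continuous_const).inv₀
        (fun e => by dsimp; positivity))).aestronglyMeasurable
    · filter_upwards with e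
      rw [Real.norm_eq_abs, _root_.abs_of_nonneg (by positivity)]
      apply mul_le_mul_of_nonneg_left _ (by positivity : (0:ℝ) ≤ 8*b)
      apply inv_anti₀ (by positivity)
      nlinarith [sq_nonneg e]
  have hKint : (∫ e : ℝ, (∫ E in (0:ℝ)..b, ((E - e)^2 + (T⁻¹)^2)⁻¹) ∂ν)
      ≤ M * (2*b) * (Real.pi * T) + 8 * b * ((2*b)^2)⁻¹ := by
    have hind_int : Integrable (fun e : ℝ =>
        Set.indicator (Set.Icc (-(2*b)) (2*b)) (fun _ => Real.pi * T) e) ν :=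
      (integrable_const (Real.pi * T)).indicator measurableSet_Icc
    calc (∫ e : ℝ, (∫ E in (0:ℝ)..b, ((E - e)^2 + (T⁻¹)^2)⁻¹) ∂ν)
        ≤ ∫ e : ℝ, (Set.indicator (Set.Icc (-(2*b)) (2*b)) (fun _ => Real.pi * T) e
            + 8 * b * (e^2 + (2*b)^2)⁻¹) ∂ν :=
          integral_mono_of_nonneg
            (Filter.Eventually.of_forall fun e => intervalIntegral.integral_nonneg hb0.le
              (fun E _ => by positivity))
            (hind_int.add htail_int)
            (Filter.Eventually.of_forall hK)
      _ = (ν (Set.Icc (-(2*b)) (2*b))).toReal * (Real.pi * T)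
            + ∫ e : ℝ, 8 * b * (e^2 + (2*b)^2)⁻¹ ∂ν := by
          rw [integral_add hind_int htail_int]
          congr 1
          rw [integral_indicator_const _ measurableSet_Icc, smul_eq_mul]
          rfl
      _ ≤ M * (2*b) * (Real.pi * T) + 8 * b * ((2*b)^2)⁻¹ := by
          apply add_le_add
          · exact mul_le_mul_of_nonneg_right hIcc hπT.le
          · rw [integral_const_mul]
            exact mul_le_mul_of_nonneg_left (hνD (2*b) (by positivity)) (by positivity)
  -- finiteness of the index set
  haveI hfin : Fintype {k : ℤ // |(k : ℝ)| ≤ T ^ (1 + α)} := by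
    apply Set.Finite.fintype
    apply Set.Finite.subset (Set.finite_Icc (-(⌈T^(1+α)⌉)) ⌈T^(1+α)⌉)
    intro k hk
    obtain ⟨h1, h2⟩ := abs_le.mp (show |(k:ℝ)| ≤ T^(1+α) from hk)
    rw [Set.mem_Icc]
    constructor
    · have : ((-⌈T^(1+α)⌉ : ℤ) : ℝ) ≤ (k:ℝ) := by
        push_cast
        linarith [Int.le_ceil (T^(1+α))]
      exact_mod_cast this
    · have : (k:ℝ) ≤ ((⌈T^(1+α)⌉ : ℤ) : ℝ) := le_trans h2 (Int.le_ceil _)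
      exact_mod_cast this
  rw [tsum_fintype]
  -- the finite index set, as a finset of ℤ
  set s₀ : Finset ℤ := Finset.univ.map
    (Function.Embedding.subtype fun k : ℤ => |(k : ℝ)| ≤ T ^ (1 + α)) with hs₀
  set W := T ^ ((1+α)*q) with hW
  have hW0 : (0:ℝ) ≤ W := (Real.rpow_pos_of_pos hT0 _).le
  have hInn : ∀ k : ℤ, (0:ℝ) ≤ ∫ E in (0:ℝ)..b,
      (∫ ω, ‖green (J ω) ((E:ℂ) + Complex.I / (T:ℂ)) 0 k‖ ^ 2 ∂P) / (Real.pi * T) := by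
    intro k
    apply intervalIntegral.integral_nonneg hb0.le
    intro E _
    exact div_nonneg (integral_nonneg fun ω => by positivity) hπT.le
  have hII : ∀ k : ℤ, IntervalIntegrable (fun E : ℝ =>
      (∫ ω, ‖green (J ω) ((E:ℂ) + Complex.I / (T:ℂ)) 0 k‖ ^ 2 ∂P) / (Real.pi * T))
      volume 0 b := fun k => ((hFcont k).div_const _).intervalIntegrable 0 b
  calc (∑ n : {k : ℤ // |(k : ℝ)| ≤ T ^ (1 + α)},
        |((n : ℤ) : ℝ)| ^ q * ∫ E in (0:ℝ)..(T ^ (-η)),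
          (∫ ω, ‖green (J ω) ((E : ℂ) + Complex.I / (T : ℂ)) 0 (n : ℤ)‖ ^ 2 ∂P)
            / (Real.pi * T))
      ≤ ∑ n : {k : ℤ // |(k : ℝ)| ≤ T ^ (1 + α)},
        W * ∫ E in (0:ℝ)..b,
          (∫ ω, ‖green (J ω) ((E : ℂ) + Complex.I / (T : ℂ)) 0 (n : ℤ)‖ ^ 2 ∂P)
            / (Real.pi * T) := by
        apply Finset.sum_le_sum
        intro n _
        apply mul_le_mul_of_nonneg_right _ (hInn (n:ℤ))
        calc |((n : ℤ) : ℝ)| ^ q ≤ (T^(1+α)) ^ q :=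
              Real.rpow_le_rpow (abs_nonneg _) n.2 hq.le
          _ = W := by rw [hW, ← Real.rpow_mul hT0.le]
    _ = W * ∑ k ∈ s₀, ∫ E in (0:ℝ)..b,
          (∫ ω, ‖green (J ω) ((E : ℂ) + Complex.I / (T : ℂ)) 0 k‖ ^ 2 ∂P)
            / (Real.pi * T) := by
        rw [← Finset.mul_sum, hs₀, Finset.sum_map]
        rfl
    _ = W * ∫ E in (0:ℝ)..b, ∑ k ∈ s₀,
          (∫ ω, ‖green (J ω) ((E : ℂ) + Complex.I / (T : ℂ)) 0 k‖ ^ 2 ∂P)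
            / (Real.pi * T) := by
        rw [intervalIntegral.integral_finset_sum (fun k _ => hII k)]
    _ ≤ W * ∫ E in (0:ℝ)..b,
          (∫ e : ℝ, ((E - e)^2 + (T⁻¹)^2)⁻¹ ∂ν) / (Real.pi * T) := by
        apply mul_le_mul_of_nonneg_left _ hW0
        apply intervalIntegral.integral_mono_on hb0.le
        · exact (continuous_finset_sum s₀ (fun k _ => (hFcont k).div_const _)).intervalIntegrable 0 b
        · exact (hGcont.div_const _).intervalIntegrable 0 b
        · intro E _
          rw [← Finset.sum_div]
          gcongr
          exact hkey s₀ E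
    _ = W * ((∫ e : ℝ, (∫ E in (0:ℝ)..b, ((E - e)^2 + (T⁻¹)^2)⁻¹) ∂ν) / (Real.pi * T)) := by
        rw [intervalIntegral.integral_div, hswap]
    _ ≤ W * ((M * (2*b) * (Real.pi * T) + 8 * b * ((2*b)^2)⁻¹) / (Real.pi * T)) := by
        apply mul_le_mul_of_nonneg_left _ hW0
        gcongr
    _ ≤ W * ((2*M + 2/Real.pi) * b) := by
        apply mul_le_mul_of_nonneg_left _ hW0
        have hTb2 : (1:ℝ) ≤ T * (b*b) := by
          have h1 : T * (b*b) = T ^ (1 - 2*η) := by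
            rw [hbdef]
            calc T * (T^(-η) * T^(-η)) = T^(1:ℝ) * (T^(-η)*T^(-η)) := by rw [Real.rpow_one]
              _ = T^((1:ℝ) + (-η + -η)) := by rw [← Real.rpow_add hT0, ← Real.rpow_add hT0]
              _ = T^(1 - 2*η) := by ring_nf
          rw [h1]
          calc (1:ℝ) = T^(0:ℝ) := (Real.rpow_zero T).symm
            _ ≤ T^(1-2*η) := Real.rpow_le_rpow_of_exponent_le hT1.le (by linarith)
        have e1 : M*(2*b)*(Real.pi*T)/(Real.pi*T) = 2*(M*b) := by
          field_simp
        have e2 : (8:ℝ)*b*((2*b)^2)⁻¹ = 2/b := by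
          field_simp
          ring
        have e3 : ((2:ℝ)/b)/(Real.pi*T) ≤ (2/Real.pi)*b := by
          have hkey2 : ((2:ℝ)/b)/(Real.pi*T) = (2/Real.pi) * (1/(T*b)) := by
            field_simp
          rw [hkey2]
          apply mul_le_mul_of_nonneg_left _ (by positivity)
          rw [div_le_iff₀ (by positivity)]
          nlinarith [hTb2]
        calc (M * (2*b) * (Real.pi * T) + 8 * b * ((2*b)^2)⁻¹) / (Real.pi * T)
            = M*(2*b)*(Real.pi*T)/(Real.pi*T) + (8*b*((2*b)^2)⁻¹)/(Real.pi*T) := by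
              rw [add_div]
          _ = 2*(M*b) + (2/b)/(Real.pi*T) := by rw [e1, e2]
          _ ≤ 2*(M*b) + (2/Real.pi)*b := by linarith
          _ = (2*M + 2/Real.pi)*b := by ring
    _ = (2 * M + 2 / Real.pi) * T ^ (q - η + α * q) := by
        have hWb : W * b = T ^ (q - η + α*q) := by
          rw [hW, hbdef, ← Real.rpow_add hT0]
          congr 1
          ring
        calc W * ((2*M + 2/Real.pi) * b) = (2*M + 2/Real.pi) * (W * b) := by ring
          _ = (2 * M + 2 / Real.pi) * T ^ (q - η + α * q) := by rw [hWb]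


end
end
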